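/- arXiv:2106.00081 — 4 statements merged into one kernel-verified Lean document; each statement's English description precedes it below -/
import Mathlib

section
/- Let α ∈ (0,1), d, d_w > 0, d_J > 1, L > 1, and let c_1, c_2, c_3, c_4, c_6, C_η, A, A' > 0 be constants. Then there exist constants B_1, B_2 > 0 depending only on these constants (and not on M, t, r) such that the following holds: for every nonnegative integer M, every t with 0 < t < L^{α M d_w}, every r ∈ (0, L^M], and all measurable functions η, G : (0,∞) → [0,∞) satisfying (i) η(u) ≤ C_η·t·u^{−1−α} for all u > 0; (ii) c_1·f_{c_2}(s,r) ≤ G(s) for all s > 0, G(s) ≤ c_3·f_{c_4}(s,r) for 0 < s < L^{M d_w}, and G(s) ≤ c_6·L^{−Md} for s ≥ L^{M d_w}; (iii) A·q(t,r) ≤ ∫_0^∞ f_{c_2}(s,r)·η(s) ds and ∫_0^∞ f_{c_4}(s,r)·η(s) ds ≤ A'·q(t,r); one has B_1·q(t,r) ≤ ∫_0^∞ G(s)·η(s) ds ≤ B_2·q(t,r). -/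
open MeasureTheory Set

/-- The subgaussian profile `f_c(t,r) = t^{-d/d_w} exp(-c (r / t^{1/d_w})^{d_w/(d_J-1)})`. -/
noncomputable def fprof (d dw dJ c t r : ℝ) : ℝ :=
  t ^ (-(d / dw)) * Real.exp (-c * (r / t ^ (1 / dw)) ^ (dw / (dJ - 1)))

/-- The stable heat-kernel profile
`q(t,r) = t^{-d/(α d_w)} · min((t^{1/(α d_w)}/r)^{d+α d_w}, 1)`. -/
noncomputable def qprof (d dw α t r : ℝ) : ℝ :=
  t ^ (-(d / (α * dw))) * min ((t ^ (1 / (α * dw)) / r) ^ (d + α * dw)) 1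

lemma exp_neg_le_pow (n : ℕ) (hn : 0 < n) {w : ℝ} (hw : 0 < w) :
    Real.exp (-w) ≤ ((n : ℝ) / w) ^ n := by
  have hn' : (0:ℝ) < n := by exact_mod_cast hn
  have h1 : Real.exp (-w) = Real.exp (-(w / n)) ^ n := by
    rw [← Real.exp_nat_mul]; congr 1; field_simp
  rw [h1]
  apply pow_le_pow_left₀ (Real.exp_nonneg _)
  have hwn : 0 < w / n := div_pos hw hn'
  have h2 : w / n ≤ Real.exp (w / n) := by
    have := Real.add_one_le_exp (w / n); linarith
  calc Real.exp (-(w/n)) = (Real.exp (w/n))⁻¹ := by rw [Real.exp_neg]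
    _ ≤ (w/n)⁻¹ := inv_anti₀ hwn h2
    _ = (n:ℝ)/w := by rw [inv_div]

lemma fprof_nonneg (d dw dJ c : ℝ) {s : ℝ} (r : ℝ) (hs : 0 < s) :
    0 ≤ fprof d dw dJ c s r := by
  unfold fprof; positivity

lemma fprof_measurable (d dw dJ c r : ℝ) : Measurable (fun s : ℝ => fprof d dw dJ c s r) := by
  unfold fprof; fun_prop

lemma fprof_mul_le (d dw dJ c Cη t α : ℝ) (hdw : 0 < dw) (hdJ : 1 < dJ) (hc : 0 < c)
    (n : ℕ) (hn : 0 < n) {s r : ℝ} (hs : 0 < s) (hr : 0 < r)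
    {e : ℝ} (he : e ≤ Cη * t * s ^ (-1-α)) (he0 : 0 ≤ e) :
    fprof d dw dJ c s r * e ≤
      ((n:ℝ)/c)^n * r ^ (-((dw/(dJ-1)) * (n:ℝ))) * (Cη*t) *
        s ^ ((dw/(dJ-1)) * (n:ℝ)/dw - d/dw - (1+α)) := by
  set β := dw/(dJ-1) with hβdef
  have hβ : 0 < β := div_pos hdw (by linarith)
  set y := r / s ^ (1/dw) with hydef
  have hy : 0 < y := div_pos hr (Real.rpow_pos_of_pos hs _)
  have hw : 0 < c * y ^ β := by positivity
  have e1 : Real.exp (-(c * y ^ β)) ≤ ((n:ℝ)/(c * y ^ β))^n := exp_neg_le_pow n hn hw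
  have e2 : ((n:ℝ)/(c * y ^ β))^n = ((n:ℝ)/c)^n * y ^ (-(β*(n:ℝ))) := by
    rw [div_mul_eq_div_div, div_pow, ← Real.rpow_natCast (y ^ β) n, ← Real.rpow_mul hy.le,
      div_eq_mul_inv, ← Real.rpow_neg hy.le]
  have e3 : y ^ (-(β*(n:ℝ))) = r ^ (-(β*(n:ℝ))) * s ^ (β*(n:ℝ)/dw) := by
    rw [hydef, Real.div_rpow hr.le (Real.rpow_nonneg hs.le _), ← Real.rpow_mul hs.le,
      div_eq_mul_inv, ← Real.rpow_neg hs.le]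
    congr 1
    field_simp
  have h4 : fprof d dw dJ c s r * e ≤
      (s ^ (-(d/dw)) * (((n:ℝ)/c)^n * (r ^ (-(β*(n:ℝ))) * s ^ (β*(n:ℝ)/dw)))) *
        (Cη*t*s ^ (-1-α)) := by
    have hf : fprof d dw dJ c s r = s ^ (-(d/dw)) * Real.exp (-(c * y ^ β)) := by
      rw [fprof, neg_mul]
    rw [hf]
    apply mul_le_mul _ he he0 (by positivity)
    apply mul_le_mul_of_nonneg_left _ (Real.rpow_nonneg hs.le _)
    calc Real.exp (-(c * y ^ β)) ≤ ((n:ℝ)/(c * y ^ β))^n := e1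
      _ = ((n:ℝ)/c)^n * (r ^ (-(β*(n:ℝ))) * s ^ (β*(n:ℝ)/dw)) := by rw [e2, e3]
  refine h4.trans (le_of_eq ?_)
  rw [show β*(n:ℝ)/dw - d/dw - (1+α) = -(d/dw) + β*(n:ℝ)/dw + (-1-α) by ring,
    Real.rpow_add hs, Real.rpow_add hs]
  ring

lemma qprof_lower (d dw α L : ℝ) (hd : 0 < d) (hdw : 0 < dw) (hα0 : 0 < α) (hL : 1 < L)
    (M : ℕ) {t r : ℝ} (ht : 0 < t) (ht2 : t < L ^ (α * (M:ℝ) * dw))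
    (hr : 0 < r) (hr2 : r ≤ L ^ (M:ℝ)) :
    L ^ (-((M:ℝ)*d)) * L ^ (-(α*(M:ℝ)*dw)) * t ≤ qprof d dw α t r := by
  have hL0 : (0:ℝ) < L := by linarith
  have ha : 0 < α * dw := by positivity
  have hcomb : L ^ (-((M:ℝ)*d)) * L ^ (-(α*(M:ℝ)*dw)) = L ^ (-((M:ℝ)*(d+α*dw))) := by
    rw [← Real.rpow_add hL0]; congr 1; ring
  rw [hcomb]
  have hLX : (0:ℝ) < L ^ ((M:ℝ)*(d+α*dw)) := Real.rpow_pos_of_pos hL0 _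
  rcases le_or_gt (t ^ (1/(α*dw))) r with h | h
  · have hx : t ^ (1/(α*dw)) / r ≤ 1 := (div_le_one hr).2 h
    have hmin : min ((t ^ (1/(α*dw)) / r) ^ (d + α*dw)) 1 = (t ^ (1/(α*dw)) / r) ^ (d + α*dw) :=
      min_eq_left (Real.rpow_le_one (by positivity) hx (by linarith))
    rw [qprof, hmin]
    have hq : t ^ (-(d/(α*dw))) * (t ^ (1/(α*dw)) / r) ^ (d + α*dw) = t * r ^ (-(d+α*dw)) := by
      rw [Real.div_rpow (Real.rpow_nonneg ht.le _) hr.le, ← Real.rpow_mul ht.le,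
        div_eq_mul_inv (t ^ (1 / (α * dw) * (d + α * dw))), ← Real.rpow_neg hr.le,
        ← mul_assoc, ← Real.rpow_add ht,
        show -(d/(α*dw)) + 1/(α*dw)*(d+α*dw) = 1 from by field_simp; ring, Real.rpow_one]
    rw [hq]
    have h1 : L ^ (-((M:ℝ)*(d+α*dw))) ≤ r ^ (-(d+α*dw)) := by
      rw [Real.rpow_neg hL0.le, Real.rpow_neg hr.le]
      apply inv_anti₀ (by positivity)
      calc r ^ (d+α*dw) ≤ (L ^ (M:ℝ)) ^ (d+α*dw) :=
            Real.rpow_le_rpow hr.le hr2 (by linarith)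
        _ = L ^ ((M:ℝ)*(d+α*dw)) := by rw [← Real.rpow_mul hL0.le]
    calc L ^ (-((M:ℝ)*(d+α*dw))) * t ≤ r ^ (-(d+α*dw)) * t :=
          mul_le_mul_of_nonneg_right h1 ht.le
      _ = t * r ^ (-(d+α*dw)) := by ring
  · have hx : 1 ≤ t ^ (1/(α*dw)) / r := ((one_lt_div hr).2 h).le
    have hmin : min ((t ^ (1/(α*dw)) / r) ^ (d + α*dw)) 1 = 1 :=
      min_eq_right (Real.one_le_rpow hx (by linarith))
    rw [qprof, hmin, mul_one]
    have h1 : (0:ℝ) < t ^ (d/(α*dw)) := Real.rpow_pos_of_pos ht _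
    have key : t * t ^ (d/(α*dw)) ≤ L ^ ((M:ℝ)*(d+α*dw)) := by
      calc t * t ^ (d/(α*dw)) = t ^ (1 + d/(α*dw)) := by rw [Real.rpow_add ht, Real.rpow_one]
        _ ≤ (L ^ (α*(M:ℝ)*dw)) ^ (1 + d/(α*dw)) :=
            Real.rpow_le_rpow ht.le ht2.le (by positivity)
        _ = L ^ ((M:ℝ)*(d+α*dw)) := by
            rw [← Real.rpow_mul hL0.le]; congr 1; field_simp; ring
    calc L ^ (-((M:ℝ)*(d+α*dw))) * t = t / L ^ ((M:ℝ)*(d+α*dw)) := by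
          rw [Real.rpow_neg hL0.le]; ring
      _ ≤ t ^ (-(d/(α*dw))) := by
          rw [Real.rpow_neg ht.le, div_le_iff₀ hLX, inv_mul_eq_div, le_div_iff₀ h1]
          exact key

/-- small-time (`t < L^{α M d_w}`) two-sided estimate of Theorem 3.1:
under the two-sided subgaussian bounds on `G` and the stable-subordination
estimates (iii), one has `B₁ q(t,r) ≤ ∫_0^∞ G(s) η(s) ds ≤ B₂ q(t,r)` with
`B₁, B₂` independent of `M, t, r`. -/
theorem stmt6 (d dw dJ α L c1 c2 c3 c4 c6 Cη A A' : ℝ)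
    (hd : 0 < d) (hdw : 0 < dw) (hdJ : 1 < dJ)
    (hα0 : 0 < α) (hα1 : α < 1) (hL : 1 < L)
    (hc1 : 0 < c1) (hc2 : 0 < c2) (hc3 : 0 < c3) (hc4 : 0 < c4) (hc6 : 0 < c6)
    (hCη : 0 < Cη) (hA : 0 < A) (hA' : 0 < A') :
    ∃ B1 B2 : ℝ, 0 < B1 ∧ 0 < B2 ∧
      ∀ M : ℕ, ∀ t : ℝ, 0 < t → t < L ^ (α * (M : ℝ) * dw) →
      ∀ r : ℝ, 0 < r → r ≤ L ^ (M : ℝ) →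
      ∀ η G : ℝ → ℝ, Measurable η → Measurable G →
        (∀ u, 0 < u → 0 ≤ η u) → (∀ s, 0 < s → 0 ≤ G s) →
        (∀ u, 0 < u → η u ≤ Cη * t * u ^ (-1 - α)) →
        (∀ s, 0 < s → c1 * fprof d dw dJ c2 s r ≤ G s) →
        (∀ s, 0 < s → s < L ^ ((M : ℝ) * dw) → G s ≤ c3 * fprof d dw dJ c4 s r) →
        (∀ s, L ^ ((M : ℝ) * dw) ≤ s → G s ≤ c6 * L ^ (-((M : ℝ) * d))) →
        (A * qprof d dw α t r ≤ ∫ s in Ioi (0 : ℝ), fprof d dw dJ c2 s r * η s) →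
        ((∫ s in Ioi (0 : ℝ), fprof d dw dJ c4 s r * η s) ≤ A' * qprof d dw α t r) →
        B1 * qprof d dw α t r ≤ (∫ s in Ioi (0 : ℝ), G s * η s) ∧
          (∫ s in Ioi (0 : ℝ), G s * η s) ≤ B2 * qprof d dw α t r := by
  refine ⟨c1 * A, c3 * A' + c6 * Cη / α, by positivity, by positivity, ?_⟩
  intro M t ht ht2 r hr hr2 η G hmη hmG hη0 hG0 hηb hGl hGu1 hGu2 hlow hup
  have hL0 : (0:ℝ) < L := by linarith
  set T := L ^ ((M:ℝ) * dw) with hTdef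
  have hT : 0 < T := Real.rpow_pos_of_pos hL0 _
  set β := dw/(dJ-1) with hβdef
  have hβ : 0 < β := div_pos hdw (by linarith)
  set n : ℕ := ⌈(d + α*dw + dw)/β⌉₊ + 1 with hndef
  have hn : 0 < n := Nat.succ_pos _
  set γ := β*(n:ℝ)/dw - d/dw - (1+α) with hγdef
  have hγ : 0 ≤ γ := by
    have h1 : (d + α*dw + dw)/β ≤ (n:ℝ) := by
      have h0 := Nat.le_ceil ((d + α*dw + dw)/β)
      have : ((⌈(d + α*dw + dw)/β⌉₊ : ℝ)) ≤ (n:ℝ) := by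
        rw [hndef]; push_cast; linarith
      linarith
    have hle : d + α*dw + dw ≤ β*(n:ℝ) := by
      calc d+α*dw+dw = ((d+α*dw+dw)/β)*β := by field_simp
        _ ≤ (n:ℝ)*β := mul_le_mul_of_nonneg_right h1 hβ.le
        _ = β*(n:ℝ) := mul_comm _ _
    have h2 : (d+α*dw+dw)/dw ≤ β*(n:ℝ)/dw := by gcongr
    have h3 : (d+α*dw+dw)/dw = d/dw + α + 1 := by field_simp
    rw [hγdef]; rw [h3] at h2; linarith
  -- constant for the pointwise bound on (0, T)
  set K : ℝ → ℝ := fun c => ((n:ℝ)/c)^n * r ^ (-(β*(n:ℝ))) * (Cη*t) * (max T 1) ^ γ with hKdef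
  have keyc : ∀ c, 0 < c → ∀ s ∈ Ioo (0:ℝ) T, fprof d dw dJ c s r * η s ≤ K c := by
    intro c hc s hs
    have h1 := fprof_mul_le d dw dJ c Cη t α hdw hdJ hc n hn hs.1 hr
      (hηb s hs.1) (hη0 s hs.1)
    refine h1.trans ?_
    rw [hKdef]
    have h2 : s ^ γ ≤ (max T 1) ^ γ :=
      Real.rpow_le_rpow hs.1.le (hs.2.le.trans (le_max_left _ _)) hγ
    rw [← hβdef, ← hγdef]
    exact mul_le_mul_of_nonneg_left h2 (by positivity)
  -- tail pointwise bound for fprof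
  have ftail : ∀ c, 0 < c → ∀ s, T ≤ s → fprof d dw dJ c s r ≤ T ^ (-(d/dw)) := by
    intro c hc s hs
    have hs0 : 0 < s := lt_of_lt_of_le hT hs
    have h1 : fprof d dw dJ c s r ≤ s ^ (-(d/dw)) := by
      rw [fprof]
      nth_rewrite 2 [← mul_one (s ^ (-(d/dw)))]
      refine mul_le_mul_of_nonneg_left (Real.exp_le_one_iff.2 ?_) (Real.rpow_nonneg hs0.le _)
      have h0 : (0:ℝ) ≤ (r / s ^ (1/dw)) ^ (dw/(dJ-1)) := by positivity
      have := mul_nonneg hc.le h0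
      linarith
    refine h1.trans ?_
    rw [Real.rpow_neg hs0.le, Real.rpow_neg hT.le]
    exact inv_anti₀ (by positivity) (Real.rpow_le_rpow hT.le hs (by positivity))
  -- integrability helper
  have intOn : ∀ (F : ℝ → ℝ) (K1 K2 : ℝ), Measurable F →
      (∀ s ∈ Ioo (0:ℝ) T, |F s| ≤ K1) →
      (∀ s ∈ Ici T, |F s| ≤ K2 * s ^ (-1-α)) →
      IntegrableOn F (Ioi (0:ℝ)) := by
    intro F K1 K2 hmF h1 h2
    rw [← Ioo_union_Ici_eq_Ioi hT]
    apply IntegrableOn.union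
    · refine Integrable.mono' (g := fun _ => K1) (integrableOn_const measure_Ioo_lt_top.ne)
        hmF.aestronglyMeasurable.restrict ?_
      rw [ae_restrict_iff' measurableSet_Ioo]
      exact ae_of_all _ fun s hs => by simpa [Real.norm_eq_abs] using h1 s hs
    · refine Integrable.mono' (g := fun s => K2 * s ^ (-1-α)) ((integrableOn_Ici_iff_integrableOn_Ioi).mpr
        ((integrableOn_Ioi_rpow_of_lt (show (-1-α) < -1 by linarith) hT).const_mul K2))
        hmF.aestronglyMeasurable.restrict ?_
      rw [ae_restrict_iff' measurableSet_Ici]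
      exact ae_of_all _ fun s hs => by simpa [Real.norm_eq_abs] using h2 s hs
  -- integrability of fprof * η
  have hfint : ∀ c, 0 < c → IntegrableOn (fun s => fprof d dw dJ c s r * η s) (Ioi (0:ℝ)) := by
    intro c hc
    apply intOn _ (K c) (T ^ (-(d/dw)) * (Cη*t)) ((fprof_measurable d dw dJ c r).mul hmη)
    · intro s hs
      simp only [Pi.mul_apply]; rw [abs_of_nonneg (mul_nonneg (fprof_nonneg d dw dJ c r hs.1) (hη0 s hs.1))]
      exact keyc c hc s hs
    · intro s hs
      have hs0 : 0 < s := lt_of_lt_of_le hT hs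
      simp only [Pi.mul_apply]; rw [abs_of_nonneg (mul_nonneg (fprof_nonneg d dw dJ c r hs0) (hη0 s hs0))]
      calc fprof d dw dJ c s r * η s ≤ T ^ (-(d/dw)) * (Cη*t*s ^ (-1-α)) :=
            mul_le_mul (ftail c hc s hs) (hηb s hs0) (hη0 s hs0) (by positivity)
        _ = T ^ (-(d/dw)) * (Cη*t) * s ^ (-1-α) := by ring
  -- integrability of G * η
  have hGint : IntegrableOn (fun s => G s * η s) (Ioi (0:ℝ)) := by
    apply intOn _ (c3 * K c4) (c6 * L ^ (-((M:ℝ)*d)) * (Cη*t)) (hmG.mul hmη)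
    · intro s hs
      simp only [Pi.mul_apply]; rw [abs_of_nonneg (mul_nonneg (hG0 s hs.1) (hη0 s hs.1))]
      calc G s * η s ≤ (c3 * fprof d dw dJ c4 s r) * η s :=
            mul_le_mul_of_nonneg_right (hGu1 s hs.1 hs.2) (hη0 s hs.1)
        _ = c3 * (fprof d dw dJ c4 s r * η s) := by ring
        _ ≤ c3 * K c4 := mul_le_mul_of_nonneg_left (keyc c4 hc4 s hs) hc3.le
    · intro s hs
      have hs0 : 0 < s := lt_of_lt_of_le hT hs
      simp only [Pi.mul_apply]; rw [abs_of_nonneg (mul_nonneg (hG0 s hs0) (hη0 s hs0))]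
      calc G s * η s ≤ (c6 * L ^ (-((M:ℝ)*d))) * (Cη*t*s ^ (-1-α)) :=
            mul_le_mul (hGu2 s hs) (hηb s hs0) (hη0 s hs0) (by positivity)
        _ = c6 * L ^ (-((M:ℝ)*d)) * (Cη*t) * s ^ (-1-α) := by ring
  constructor
  · -- lower bound
    calc c1 * A * qprof d dw α t r = c1 * (A * qprof d dw α t r) := by ring
      _ ≤ c1 * ∫ s in Ioi (0:ℝ), fprof d dw dJ c2 s r * η s :=
          mul_le_mul_of_nonneg_left hlow hc1.le
      _ = ∫ s in Ioi (0:ℝ), c1 * (fprof d dw dJ c2 s r * η s) := (integral_const_mul _ _).symm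
      _ ≤ ∫ s in Ioi (0:ℝ), G s * η s := by
          refine setIntegral_mono_on ((hfint c2 hc2).const_mul c1) hGint measurableSet_Ioi ?_
          intro s hs
          calc c1 * (fprof d dw dJ c2 s r * η s) = (c1 * fprof d dw dJ c2 s r) * η s := by ring
            _ ≤ G s * η s := mul_le_mul_of_nonneg_right (hGl s hs) (hη0 s hs)
  · -- upper bound
    have hdisj : Disjoint (Ioo (0:ℝ) T) (Ici T) :=
      Set.disjoint_left.2 fun a ha hb => absurd hb (not_le.2 ha.2)
    have hIci : Ici T ⊆ Ioi (0:ℝ) := fun s hs => lt_of_lt_of_le hT hs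
    have hsplit : (∫ s in Ioi (0:ℝ), G s * η s)
        = (∫ s in Ioo (0:ℝ) T, G s * η s) + ∫ s in Ici T, G s * η s := by
      rw [← Ioo_union_Ici_eq_Ioi hT]
      exact setIntegral_union hdisj measurableSet_Ici
        (hGint.mono_set (by rw [← Ioo_union_Ici_eq_Ioi hT]; exact subset_union_left))
        (hGint.mono_set (by rw [← Ioo_union_Ici_eq_Ioi hT]; exact subset_union_right))
    have hp1 : (∫ s in Ioo (0:ℝ) T, G s * η s) ≤ c3 * (A' * qprof d dw α t r) := by
      calc (∫ s in Ioo (0:ℝ) T, G s * η s)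
          ≤ ∫ s in Ioo (0:ℝ) T, c3 * (fprof d dw dJ c4 s r * η s) := by
            refine setIntegral_mono_on (hGint.mono_set Ioo_subset_Ioi_self)
              (((hfint c4 hc4).mono_set Ioo_subset_Ioi_self).const_mul c3)
              measurableSet_Ioo ?_
            intro s hs
            calc G s * η s ≤ (c3 * fprof d dw dJ c4 s r) * η s :=
                  mul_le_mul_of_nonneg_right (hGu1 s hs.1 hs.2) (hη0 s hs.1)
              _ = c3 * (fprof d dw dJ c4 s r * η s) := by ring
        _ = c3 * ∫ s in Ioo (0:ℝ) T, fprof d dw dJ c4 s r * η s := integral_const_mul _ _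
        _ ≤ c3 * ∫ s in Ioi (0:ℝ), fprof d dw dJ c4 s r * η s := by
            refine mul_le_mul_of_nonneg_left (setIntegral_mono_set (hfint c4 hc4) ?_
              Ioo_subset_Ioi_self.eventuallyLE) hc3.le
            exact (ae_restrict_iff' measurableSet_Ioi).2 (ae_of_all _ fun s hs =>
              mul_nonneg (fprof_nonneg d dw dJ c4 r hs) (hη0 s hs))
        _ ≤ c3 * (A' * qprof d dw α t r) := mul_le_mul_of_nonneg_left hup hc3.le
    have hp2 : (∫ s in Ici T, G s * η s) ≤ (c6 * Cη / α) * qprof d dw α t r := by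
      have hTα : T ^ (-α) = L ^ (-(α*(M:ℝ)*dw)) := by
        rw [hTdef, ← Real.rpow_mul hL0.le]; congr 1; ring
      calc (∫ s in Ici T, G s * η s)
          ≤ ∫ s in Ici T, (c6 * L ^ (-((M:ℝ)*d)) * (Cη*t)) * s ^ (-1-α) := by
            refine setIntegral_mono_on (hGint.mono_set hIci)
              ((integrableOn_Ici_iff_integrableOn_Ioi).mpr
                ((integrableOn_Ioi_rpow_of_lt (show (-1-α) < -1 by linarith) hT).const_mul _))
              measurableSet_Ici ?_
            intro s hs
            have hs0 : 0 < s := lt_of_lt_of_le hT hs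
            calc G s * η s ≤ (c6 * L ^ (-((M:ℝ)*d))) * (Cη*t*s ^ (-1-α)) :=
                  mul_le_mul (hGu2 s hs) (hηb s hs0) (hη0 s hs0) (by positivity)
              _ = (c6 * L ^ (-((M:ℝ)*d)) * (Cη*t)) * s ^ (-1-α) := by ring
        _ = (c6 * L ^ (-((M:ℝ)*d)) * (Cη*t)) * ∫ s in Ici T, s ^ (-1-α) :=
            integral_const_mul _ _
        _ = (c6 * L ^ (-((M:ℝ)*d)) * (Cη*t)) * (T ^ (-α) / α) := by
            rw [integral_Ici_eq_integral_Ioi,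
              integral_Ioi_rpow_of_lt (show (-1-α) < -1 by linarith) hT,
              show (-1-α) + 1 = -α by ring, neg_div_neg_eq]
        _ = (c6 * Cη / α) * (L ^ (-((M:ℝ)*d)) * L ^ (-(α*(M:ℝ)*dw)) * t) := by
            rw [hTα]; field_simp
        _ ≤ (c6 * Cη / α) * qprof d dw α t r :=
            mul_le_mul_of_nonneg_left
              (qprof_lower d dw α L hd hdw hα0 hL M ht ht2 hr hr2) (by positivity)
    calc (∫ s in Ioi (0:ℝ), G s * η s)
        = (∫ s in Ioo (0:ℝ) T, G s * η s) + ∫ s in Ici T, G s * η s := hsplit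
      _ ≤ c3 * (A' * qprof d dw α t r) + (c6 * Cη / α) * qprof d dw α t r :=
          add_le_add hp1 hp2
      _ = (c3 * A' + c6 * Cη / α) * qprof d dw α t r := by ring
end

section
/- Let α ∈ (0,1), m > 0 and set K := 2·m^{1−1/α}. Let d, d_w > 0, d_J > 1, L > 1, and let c_3, c_4, c_6, C > 0 be constants. Then there exists a constant C' > 0 depending only on c_6, C, m, α such that the following holds: for every nonnegative integer M, every t with 0 < t ≤ L^{M d_w}, every r > 0, and all measurable functions η, G : (0,∞) → [0,∞) satisfying η(u) ≤ C·t·u^{−1−α} for all u > 0, G(s) ≤ c_3·f_{c_4}(s,r) for 0 < s < K·L^{M d_w}, and G(s) ≤ c_6·L^{−Md} for s ≥ K·L^{M d_w}, one has e^{mt}·∫_0^∞ G(s)·e^{−m^{1/α} s}·η(s) ds ≤ c_3·e^{mt}·∫_0^∞ f_{c_4}(s,r)·e^{−m^{1/α} s}·η(s) ds + C'·t·L^{−M d_w (1+α)}·e^{−m·L^{M d_w}}. -/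
open MeasureTheory Set


/-- exponential integral over a half line -/
lemma exp_int_Ioi (μ A : ℝ) (hμ : 0 < μ) :
    ∫ s in Ioi A, Real.exp (-(μ * s)) = Real.exp (-(μ * A)) / μ := by
  have hderiv : ∀ x ∈ Ici A, HasDerivAt (fun y => -Real.exp (-(μ * y)) / μ)
      (Real.exp (-(μ * x))) x := by
    intro x _
    have h1 : HasDerivAt (fun y : ℝ => -(μ * y)) (-μ) x := by
      have h := ((hasDerivAt_id' x).const_mul μ).neg
      rw [mul_one] at h
      exact h
    have h2 := (h1.exp).neg.div_const μ
    have hμ' := hμ.ne'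
    have h3 : -(Real.exp (-(μ * x)) * -μ) / μ = Real.exp (-(μ * x)) := by field_simp
    rw [h3] at h2
    exact h2
  have hint : IntegrableOn (fun x => Real.exp (-(μ * x))) (Ioi A) := by
    simpa [neg_mul] using exp_neg_integrableOn_Ioi A hμ
  have htend : Filter.Tendsto (fun y => -Real.exp (-(μ * y)) / μ) Filter.atTop (nhds 0) := by
    have h0 : Filter.Tendsto (fun y : ℝ => μ * y) Filter.atTop Filter.atTop :=
      Filter.Tendsto.const_mul_atTop hμ Filter.tendsto_id
    have h1 : Filter.Tendsto (fun y : ℝ => -(μ * y)) Filter.atTop Filter.atBot :=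
      Filter.tendsto_neg_atTop_atBot.comp h0
    have := (Real.tendsto_exp_atBot.comp h1).neg.div_const μ
    simpa using this
  have := integral_Ioi_of_hasDerivAt_of_tendsto'
    (f := fun y => -Real.exp (-(μ * y)) / μ) (f' := fun x => Real.exp (-(μ * x)))
    hderiv hint htend
  rw [this]; ring

/-- boundedness of `s^{-p} e^{-b s^{-γ}}` on `(0,∞)` -/
lemma key_bound (p b γ : ℝ) (hp : 0 ≤ p) (hb : 0 < b) (hγ : 0 < γ) :
    ∃ B : ℝ, 0 < B ∧ ∀ s : ℝ, 0 < s →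
      s ^ (-p) * Real.exp (-(b * s ^ (-γ))) ≤ B := by
  obtain ⟨n, hn⟩ : ∃ n : ℕ, p ≤ n * γ := by
    obtain ⟨n, hn⟩ := exists_nat_ge (p / γ)
    exact ⟨n, by rw [div_le_iff₀ hγ] at hn; linarith⟩
  refine ⟨max (((Nat.factorial n : ℕ) : ℝ) / b ^ n) 1, lt_of_lt_of_le one_pos (le_max_right _ _), fun s hs => ?_⟩
  rcases le_or_gt 1 s with h1 | h1
  · refine le_trans ?_ (le_max_right _ _)
    have h2 : s ^ (-p) ≤ 1 := Real.rpow_le_one_of_one_le_of_nonpos h1 (by linarith)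
    have h3 : Real.exp (-(b * s ^ (-γ))) ≤ 1 := by
      apply Real.exp_le_one_iff.mpr
      have : 0 ≤ b * s ^ (-γ) := mul_nonneg hb.le (Real.rpow_nonneg hs.le _)
      linarith
    calc s ^ (-p) * Real.exp (-(b * s ^ (-γ))) ≤ 1 * 1 :=
          mul_le_mul h2 h3 (Real.exp_pos _).le one_pos.le
      _ = 1 := by ring
  · refine le_trans ?_ (le_max_left _ _)
    set y := b * s ^ (-γ) with hy
    have hsγ : 0 < s ^ (-γ) := Real.rpow_pos_of_pos hs _
    have hy0 : 0 < y := mul_pos hb hsγ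
    have hexp : Real.exp (-y) ≤ ((Nat.factorial n : ℕ) : ℝ) / y ^ n := by
      have h4 : y ^ n ≤ ((Nat.factorial n : ℕ) : ℝ) * Real.exp y := by
        have := Real.pow_div_factorial_le_exp y hy0.le n
        rw [div_le_iff₀ (by positivity)] at this
        linarith
      rw [Real.exp_neg, inv_eq_one_div, div_le_div_iff₀ (Real.exp_pos y) (by positivity)]
      nlinarith
    have hyn : ((Nat.factorial n : ℕ) : ℝ) / y ^ n
        = (((Nat.factorial n : ℕ) : ℝ) / b ^ n) * s ^ (γ * n) := by
      have h5 : y ^ n = b ^ n * (s ^ (γ * (n:ℝ)))⁻¹ := by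
        rw [hy, mul_pow, ← Real.rpow_natCast (s ^ (-γ)) n, ← Real.rpow_mul hs.le,
          show (-γ * (n:ℝ)) = -(γ * n) by ring, Real.rpow_neg hs.le]
      rw [h5]
      have h6 : s ^ (γ * (n:ℝ)) ≠ 0 := ne_of_gt (Real.rpow_pos_of_pos hs _)
      have h7 : b ^ n ≠ 0 := by positivity
      field_simp
    calc s ^ (-p) * Real.exp (-y) ≤ s ^ (-p) * (((Nat.factorial n : ℕ) : ℝ) / y ^ n) :=
          mul_le_mul_of_nonneg_left hexp (Real.rpow_nonneg hs.le _)
      _ = (((Nat.factorial n : ℕ) : ℝ) / b ^ n) * (s ^ (-p) * s ^ (γ * n)) := by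
          rw [hyn]; ring
      _ = (((Nat.factorial n : ℕ) : ℝ) / b ^ n) * s ^ (-p + γ * n) := by rw [← Real.rpow_add hs]
      _ ≤ (((Nat.factorial n : ℕ) : ℝ) / b ^ n) * 1 := by
          apply mul_le_mul_of_nonneg_left _ (by positivity)
          exact Real.rpow_le_one hs.le h1.le (by linarith)
      _ = ((Nat.factorial n : ℕ) : ℝ) / b ^ n := by ring

/-- decomposition step in the small-time case of Theorem 4.1.
With `K = 2 m^{1-1/α}`, the relativistic subordination of `G` is bounded by the
relativistic subordination of `c₃ f_{c₄}(·,r)` plus an exponentially small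
tail term `C' t L^{-M d_w(1+α)} e^{-m L^{M d_w}}`. -/
theorem stmt11 (α m K d dw dJ L c3 c4 c6 C : ℝ)
    (hα0 : 0 < α) (hα1 : α < 1) (hm : 0 < m)
    (hK : K = 2 * m ^ (1 - 1 / α))
    (hd : 0 < d) (hdw : 0 < dw) (hdJ : 1 < dJ) (hL : 1 < L)
    (hc3 : 0 < c3) (hc4 : 0 < c4) (hc6 : 0 < c6) (hC : 0 < C) :
    ∃ C' : ℝ, 0 < C' ∧
      ∀ M : ℕ, ∀ t : ℝ, 0 < t → t ≤ L ^ ((M : ℝ) * dw) →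
      ∀ r : ℝ, 0 < r →
      ∀ η G : ℝ → ℝ, Measurable η → Measurable G →
        (∀ u, 0 < u → 0 ≤ η u) → (∀ s, 0 < s → 0 ≤ G s) →
        (∀ u, 0 < u → η u ≤ C * t * u ^ (-1 - α)) →
        (∀ s, 0 < s → s < K * L ^ ((M : ℝ) * dw) → G s ≤ c3 * fprof d dw dJ c4 s r) →
        (∀ s, K * L ^ ((M : ℝ) * dw) ≤ s → G s ≤ c6 * L ^ (-((M : ℝ) * d))) →
        Real.exp (m * t) *
            (∫ s in Ioi (0 : ℝ), G s * Real.exp (-(m ^ (1 / α)) * s) * η s) ≤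
          c3 * (Real.exp (m * t) *
            (∫ s in Ioi (0 : ℝ),
              fprof d dw dJ c4 s r * Real.exp (-(m ^ (1 / α)) * s) * η s)) +
          C' * t * L ^ (-((M : ℝ) * dw * (1 + α))) *
            Real.exp (-(m * L ^ ((M : ℝ) * dw))) := by
  have hL0 : (0:ℝ) < L := lt_trans one_pos hL
  have hμ0 : (0:ℝ) < m ^ (1/α) := Real.rpow_pos_of_pos hm _
  have hK0 : (0:ℝ) < K := by
    rw [hK]; exact mul_pos two_pos (Real.rpow_pos_of_pos hm _)
  set μ := m ^ (1/α) with hμdef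
  set C' := c6 * C * K ^ (-(1+α)) / μ with hC'def
  have hC'0 : 0 < C' :=
    div_pos (mul_pos (mul_pos hc6 hC) (Real.rpow_pos_of_pos hK0 _)) hμ0
  refine ⟨C', hC'0, ?_⟩
  intro M t ht htw r hr η G hηm hGm hη0 hG0 hηb hG1 hG2
  set w := L ^ ((M:ℝ) * dw) with hwdef
  have hw0 : 0 < w := Real.rpow_pos_of_pos hL0 _
  set A := K * w with hAdef
  have hA0 : 0 < A := mul_pos hK0 hw0
  -- nonnegativity of the f-integrand
  have hFi_nonneg : ∀ s ∈ Ioi (0:ℝ), 0 ≤ fprof d dw dJ c4 s r * Real.exp (-μ * s) * η s := by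
    intro s hs
    exact mul_nonneg (mul_nonneg
      (mul_nonneg (Real.rpow_nonneg (le_of_lt hs) _) (Real.exp_nonneg _))
      (Real.exp_nonneg _)) (hη0 s hs)
  by_cases hInt : IntegrableOn (fun s => G s * Real.exp (-μ * s) * η s) (Ioi (0:ℝ)) volume
  swap
  · rw [integral_undef hInt, mul_zero]
    have h1 : 0 ≤ ∫ s in Ioi (0:ℝ), fprof d dw dJ c4 s r * Real.exp (-μ * s) * η s :=
      setIntegral_nonneg measurableSet_Ioi hFi_nonneg
    have h2 : 0 ≤ c3 * (Real.exp (m*t) *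
        (∫ s in Ioi (0:ℝ), fprof d dw dJ c4 s r * Real.exp (-μ * s) * η s)) :=
      mul_nonneg hc3.le (mul_nonneg (Real.exp_nonneg _) h1)
    have h3 : 0 < C' * t * L ^ (-((M:ℝ) * dw * (1+α))) * Real.exp (-(m * w)) :=
      mul_pos (mul_pos (mul_pos hC'0 ht) (Real.rpow_pos_of_pos hL0 _)) (Real.exp_pos _)
    linarith
  -- main case
  set b := c4 * r ^ (dw/(dJ-1)) with hbdef
  have hb0 : 0 < b := mul_pos hc4 (Real.rpow_pos_of_pos hr _)
  set γ := 1/(dJ-1) with hγdef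
  have hγ0 : 0 < γ := by rw [hγdef]; exact div_pos one_pos (by linarith)
  have hdJ0 : dJ - 1 ≠ 0 := by intro h; linarith [hdJ]
  have hdw0 : dw ≠ 0 := ne_of_gt hdw
  have hfprof_eq : ∀ s : ℝ, 0 < s →
      fprof d dw dJ c4 s r = s ^ (-(d/dw)) * Real.exp (-(b * s ^ (-γ))) := by
    intro s hs
    unfold fprof
    have harg : -c4 * (r / s ^ (1/dw)) ^ (dw/(dJ-1)) = -(b * s ^ (-γ)) := by
      rw [Real.div_rpow hr.le (Real.rpow_nonneg hs.le _), ← Real.rpow_mul hs.le,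
        show (1/dw) * (dw/(dJ-1)) = γ by rw [hγdef]; field_simp,
        Real.rpow_neg hs.le, hbdef]
      field_simp
    rw [harg]
  obtain ⟨B, hB0, hB⟩ := key_bound (d/dw + 1 + α) b γ (by positivity) hb0 hγ0
  have hf_meas : Measurable fun s : ℝ => fprof d dw dJ c4 s r := by
    unfold fprof
    fun_prop
  have hFi_meas : Measurable fun s : ℝ => fprof d dw dJ c4 s r * Real.exp (-μ * s) * η s := by
    fun_prop
  -- integrability of the f-integrand
  have hFi_int : IntegrableOn
      (fun s => fprof d dw dJ c4 s r * Real.exp (-μ * s) * η s) (Ioi (0:ℝ)) := by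
    have hdom : IntegrableOn (fun s : ℝ => (C * t * B) * Real.exp (-μ * s)) (Ioi (0:ℝ)) :=
      (exp_neg_integrableOn_Ioi 0 hμ0).const_mul _
    apply Integrable.mono' hdom hFi_meas.aestronglyMeasurable
    rw [ae_restrict_iff' measurableSet_Ioi]
    apply ae_of_all
    intro s hs
    have hs0 : (0:ℝ) < s := hs
    rw [Real.norm_of_nonneg (hFi_nonneg s hs)]
    have e2 : s ^ (-(d/dw)) * s ^ (-1-α) = s ^ (-(d/dw + 1 + α)) := by
      rw [← Real.rpow_add hs0]; congr 1; ring
    calc fprof d dw dJ c4 s r * Real.exp (-μ * s) * η s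
        = (s ^ (-(d/dw)) * Real.exp (-(b * s ^ (-γ)))) * (Real.exp (-μ * s) * η s) := by
          rw [hfprof_eq s hs0]; ring
      _ ≤ (s ^ (-(d/dw)) * Real.exp (-(b * s ^ (-γ)))) *
            (Real.exp (-μ * s) * (C * t * s ^ (-1-α))) := by
          apply mul_le_mul_of_nonneg_left
            (mul_le_mul_of_nonneg_left (hηb s hs0) (Real.exp_nonneg _))
            (mul_nonneg (Real.rpow_nonneg hs0.le _) (Real.exp_nonneg _))
      _ = (C * t) * ((s ^ (-(d/dw)) * s ^ (-1-α)) * Real.exp (-(b * s ^ (-γ))))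
            * Real.exp (-μ * s) := by ring
      _ = (C * t) * (s ^ (-(d/dw + 1 + α)) * Real.exp (-(b * s ^ (-γ))))
            * Real.exp (-μ * s) := by rw [e2]
      _ ≤ (C * t) * B * Real.exp (-μ * s) := by
          apply mul_le_mul_of_nonneg_right _ (Real.exp_nonneg _)
          exact mul_le_mul_of_nonneg_left (hB s hs0) (by positivity)
      _ = (C * t * B) * Real.exp (-μ * s) := by ring
  -- split the integral
  have hsub1 : Ioo (0:ℝ) A ⊆ Ioi 0 := fun x hx => hx.1
  have hsub2 : Ici A ⊆ Ioi (0:ℝ) := fun x hx => lt_of_lt_of_le hA0 hx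
  have hGi1 : IntegrableOn (fun s => G s * Real.exp (-μ * s) * η s) (Ioo 0 A) :=
    hInt.mono_set hsub1
  have hGi2 : IntegrableOn (fun s => G s * Real.exp (-μ * s) * η s) (Ici A) :=
    hInt.mono_set hsub2
  have hsplit : (∫ s in Ioi (0:ℝ), G s * Real.exp (-μ * s) * η s)
      = (∫ s in Ioo (0:ℝ) A, G s * Real.exp (-μ * s) * η s)
        + ∫ s in Ici A, G s * Real.exp (-μ * s) * η s := by
    rw [← Ioo_union_Ici_eq_Ioi hA0]
    exact setIntegral_union
      (Set.disjoint_left.mpr fun x hx hx' => absurd hx' (not_le.mpr hx.2))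
      measurableSet_Ici hGi1 hGi2
  -- part 1
  have hI1 : (∫ s in Ioo (0:ℝ) A, G s * Real.exp (-μ * s) * η s)
      ≤ c3 * ∫ s in Ioi (0:ℝ), fprof d dw dJ c4 s r * Real.exp (-μ * s) * η s := by
    have step1 : (∫ s in Ioo (0:ℝ) A, G s * Real.exp (-μ * s) * η s)
        ≤ ∫ s in Ioo (0:ℝ) A, c3 * (fprof d dw dJ c4 s r * Real.exp (-μ * s) * η s) := by
      apply setIntegral_mono_on hGi1 ((hFi_int.mono_set hsub1).const_mul c3) measurableSet_Ioo
      intro s hs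
      have hs0 : 0 < s := hs.1
      have hEη : 0 ≤ Real.exp (-μ * s) * η s :=
        mul_nonneg (Real.exp_nonneg _) (hη0 s hs0)
      calc G s * Real.exp (-μ * s) * η s
          = G s * (Real.exp (-μ * s) * η s) := by ring
        _ ≤ (c3 * fprof d dw dJ c4 s r) * (Real.exp (-μ * s) * η s) :=
            mul_le_mul_of_nonneg_right (hG1 s hs0 hs.2) hEη
        _ = c3 * (fprof d dw dJ c4 s r * Real.exp (-μ * s) * η s) := by ring
    have step2 : (∫ s in Ioo (0:ℝ) A, c3 * (fprof d dw dJ c4 s r * Real.exp (-μ * s) * η s))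
        = c3 * ∫ s in Ioo (0:ℝ) A, fprof d dw dJ c4 s r * Real.exp (-μ * s) * η s :=
      integral_const_mul _ _
    have step3 : (∫ s in Ioo (0:ℝ) A, fprof d dw dJ c4 s r * Real.exp (-μ * s) * η s)
        ≤ ∫ s in Ioi (0:ℝ), fprof d dw dJ c4 s r * Real.exp (-μ * s) * η s :=
      setIntegral_mono_set hFi_int
        ((ae_restrict_iff' measurableSet_Ioi).mpr (ae_of_all _ hFi_nonneg))
        (HasSubset.Subset.eventuallyLE hsub1)
    calc (∫ s in Ioo (0:ℝ) A, G s * Real.exp (-μ * s) * η s)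
        ≤ c3 * ∫ s in Ioo (0:ℝ) A, fprof d dw dJ c4 s r * Real.exp (-μ * s) * η s := by
          rw [← step2]; exact step1
      _ ≤ c3 * ∫ s in Ioi (0:ℝ), fprof d dw dJ c4 s r * Real.exp (-μ * s) * η s :=
          mul_le_mul_of_nonneg_left step3 hc3.le
  -- part 2
  have hEint : IntegrableOn (fun s : ℝ => Real.exp (-μ * s)) (Ici A) := by
    have := exp_neg_integrableOn_Ioi (A-1) hμ0 (b := μ)
    exact this.mono_set (Ici_subset_Ioi.mpr (by linarith))
  have hI2 : (∫ s in Ici A, G s * Real.exp (-μ * s) * η s)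
      ≤ (c6 * L ^ (-((M:ℝ)*d)) * (C * t * A ^ (-1-α))) * (Real.exp (-(μ * A)) / μ) := by
    have hconst0 : 0 ≤ c6 * L ^ (-((M:ℝ)*d)) :=
      mul_nonneg hc6.le (Real.rpow_nonneg hL0.le _)
    have hb2 : ∀ s ∈ Ici A, G s * Real.exp (-μ * s) * η s
        ≤ (c6 * L ^ (-((M:ℝ)*d)) * (C * t * A ^ (-1-α))) * Real.exp (-μ * s) := by
      intro s hs
      have hs0 : 0 < s := lt_of_lt_of_le hA0 hs
      have h1 : η s ≤ C * t * A ^ (-1-α) := by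
        refine (hηb s hs0).trans ?_
        apply mul_le_mul_of_nonneg_left _ (by positivity)
        exact Real.rpow_le_rpow_of_nonpos hA0 hs (by linarith)
      have h2 := hG2 s hs
      calc G s * Real.exp (-μ * s) * η s
          ≤ (c6 * L ^ (-((M:ℝ)*d))) * Real.exp (-μ * s) * η s :=
            mul_le_mul_of_nonneg_right
              (mul_le_mul_of_nonneg_right h2 (Real.exp_nonneg _)) (hη0 s hs0)
        _ ≤ (c6 * L ^ (-((M:ℝ)*d))) * Real.exp (-μ * s) * (C * t * A ^ (-1-α)) :=
            mul_le_mul_of_nonneg_left h1 (mul_nonneg hconst0 (Real.exp_nonneg _))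
        _ = (c6 * L ^ (-((M:ℝ)*d)) * (C * t * A ^ (-1-α))) * Real.exp (-μ * s) := by ring
    calc (∫ s in Ici A, G s * Real.exp (-μ * s) * η s)
        ≤ ∫ s in Ici A, (c6 * L ^ (-((M:ℝ)*d)) * (C * t * A ^ (-1-α))) * Real.exp (-μ * s) :=
          setIntegral_mono_on hGi2 (hEint.const_mul _) measurableSet_Ici hb2
      _ = (c6 * L ^ (-((M:ℝ)*d)) * (C * t * A ^ (-1-α)))
            * ∫ s in Ici A, Real.exp (-μ * s) := integral_const_mul _ _
      _ = (c6 * L ^ (-((M:ℝ)*d)) * (C * t * A ^ (-1-α))) * (Real.exp (-(μ * A)) / μ) := by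
          rw [integral_Ici_eq_integral_Ioi]
          simp_rw [neg_mul]
          rw [exp_int_Ioi μ A hμ0]
  -- final algebra for the tail term
  have hμA : μ * A = 2 * m * w := by
    have hmm : m ^ (1/α) * m ^ (1 - 1/α) = m := by
      rw [← Real.rpow_add hm, show 1/α + (1 - 1/α) = 1 by ring, Real.rpow_one]
    calc μ * A = 2 * (m ^ (1/α) * m ^ (1 - 1/α)) * w := by rw [hAdef, hK, hμdef]; ring
      _ = 2 * m * w := by rw [hmm]
  have hAexp : A ^ (-1-α) = K ^ (-(1+α)) * L ^ (-((M:ℝ) * dw * (1+α))) := by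
    rw [hAdef, show (-1-α : ℝ) = -(1+α) by ring, Real.mul_rpow hK0.le hw0.le]
    congr 1
    rw [hwdef, ← Real.rpow_mul hL0.le]
    congr 1
    ring
  have hexp2 : Real.exp (m*t) * Real.exp (-(2*m*w)) ≤ Real.exp (-(m*w)) := by
    rw [← Real.exp_add]
    apply Real.exp_le_exp.mpr
    have := mul_le_mul_of_nonneg_left htw hm.le
    linarith
  have hLMd : L ^ (-((M:ℝ)*d)) ≤ 1 :=
    Real.rpow_le_one_of_one_le_of_nonpos hL.le (neg_nonpos.mpr (by positivity))
  have hpre0 : 0 ≤ c6 * C * K ^ (-(1+α)) / μ * t * L ^ (-((M:ℝ)*dw*(1+α))) := by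
    have h1 : (0:ℝ) < c6 * C * K ^ (-(1+α)) / μ := hC'0
    exact mul_nonneg (mul_nonneg h1.le ht.le) (Real.rpow_nonneg hL0.le _)
  have hfinal2 : Real.exp (m*t) * ((c6 * L ^ (-((M:ℝ)*d)) * (C * t * A ^ (-1-α)))
        * (Real.exp (-(μ*A))/μ))
      ≤ C' * t * L ^ (-((M:ℝ)*dw*(1+α))) * Real.exp (-(m*w)) := by
    rw [hμA, hAexp, hC'def]
    calc Real.exp (m*t) * ((c6 * L ^ (-((M:ℝ)*d))
            * (C * t * (K ^ (-(1+α)) * L ^ (-((M:ℝ)*dw*(1+α))))))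
            * (Real.exp (-(2*m*w))/μ))
        = (c6 * C * K ^ (-(1+α)) / μ * t * L ^ (-((M:ℝ)*dw*(1+α))))
            * (L ^ (-((M:ℝ)*d)) * (Real.exp (m*t) * Real.exp (-(2*m*w)))) := by ring
      _ ≤ (c6 * C * K ^ (-(1+α)) / μ * t * L ^ (-((M:ℝ)*dw*(1+α))))
            * (1 * Real.exp (-(m*w))) := by
          apply mul_le_mul_of_nonneg_left _ hpre0
          exact mul_le_mul hLMd hexp2 (by positivity) one_pos.le
      _ = c6 * C * K ^ (-(1+α)) / μ * t * L ^ (-((M:ℝ)*dw*(1+α)))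
            * Real.exp (-(m*w)) := by ring
  rw [hsplit, mul_add]
  have t1 : Real.exp (m*t) * (∫ s in Ioo (0:ℝ) A, G s * Real.exp (-μ*s) * η s)
      ≤ c3 * (Real.exp (m*t)
        * ∫ s in Ioi (0:ℝ), fprof d dw dJ c4 s r * Real.exp (-μ*s) * η s) := by
    calc Real.exp (m*t) * (∫ s in Ioo (0:ℝ) A, G s * Real.exp (-μ*s) * η s)
        ≤ Real.exp (m*t) * (c3
            * ∫ s in Ioi (0:ℝ), fprof d dw dJ c4 s r * Real.exp (-μ*s) * η s) :=
          mul_le_mul_of_nonneg_left hI1 (Real.exp_nonneg _)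
      _ = c3 * (Real.exp (m*t)
            * ∫ s in Ioi (0:ℝ), fprof d dw dJ c4 s r * Real.exp (-μ*s) * η s) := by ring
  have t2 : Real.exp (m*t) * (∫ s in Ici A, G s * Real.exp (-μ*s) * η s)
      ≤ C' * t * L ^ (-((M:ℝ)*dw*(1+α))) * Real.exp (-(m*w)) :=
    (mul_le_mul_of_nonneg_left hI2 (Real.exp_nonneg _)).trans hfinal2
  exact add_le_add t1 t2
end

section
/- Let α ∈ (0,1), m > 0 with K := 2·m^{1−1/α}, let d, d_w > 0, d_J > 1, L > 1, and let c_1, c_2, c_3, c_4, c_6, C_η, A_1, A_2, A_3, A_4 > 0 be constants. For c > 0, t > 0, ρ > 0 and measurable η : (0,∞) → [0,∞), set Φ_c(t,ρ) := e^{mt}·∫_0^∞ f_c(s,ρ)·e^{−m^{1/α} s}·η(s) ds, and set R(t,ρ;A) := t^{−d/d_w}·exp(−A·min(ρ^{d_w/d_J}, (ρ·t^{−1/d_w})^{d_w/(d_J−1)})). Then there exist a nonnegative integer M_0 and constants C_3, C_4, C_5, C_6 > 0 depending only on the listed constants such that: for every integer M ≥ M_0, every t with 1 ≤ t < L^{M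 d_w}, every r ∈ (0, L^M], and all measurable η, G : (0,∞) → [0,∞) satisfying (i) η(u) ≤ C_η·t·u^{−1−α} for all u > 0; (ii) c_1·f_{c_2}(s,r) ≤ G(s) for all s > 0, G(s) ≤ c_3·f_{c_4}(s,r) for 0 < s < K·L^{M d_w}, and G(s) ≤ c_6·L^{−Md} for s ≥ K·L^{M d_w}; (iii) A_1·R(t,r;A_2) ≤ Φ_{c_2}(t,r) and Φ_{c_4}(t,r) ≤ A_3·R(t,r;A_4); one has C_3·R(t,r;C_4) ≤ e^{mt}·∫_0^∞ G(s)·e^{−m^{1/α} s}·η(s) ds ≤ C_5·R(t,r;C_6). -/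
open MeasureTheory Set

/-- The large-time relativistic profile
`R(t,ρ;A) = t^{-d/d_w} exp(-A min(ρ^{d_w/d_J}, (ρ t^{-1/d_w})^{d_w/(d_J-1)}))`. -/
noncomputable def Rprof (d dw dJ A t ρ : ℝ) : ℝ :=
  t ^ (-(d / dw)) *
    Real.exp (-A * min (ρ ^ (dw / dJ)) ((ρ * t ^ (-(1 / dw))) ^ (dw / (dJ - 1))))

/-- The relativistic subordination of the subgaussian profile:
`Φ_c(t,ρ) = e^{mt} ∫_0^∞ f_c(s,ρ) e^{-m^{1/α} s} η(s) ds`. -/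
noncomputable def Phi (d dw dJ α m : ℝ) (η : ℝ → ℝ) (c t ρ : ℝ) : ℝ :=
  Real.exp (m * t) *
    ∫ s in Ioi (0 : ℝ), fprof d dw dJ c s ρ * Real.exp (-(m ^ (1 / α)) * s) * η s

lemma exp_neg_le_rpow {x p : ℝ} (hx : 0 < x) (hp : 0 < p) :
    Real.exp (-x) ≤ (p / x) ^ p := by
  have h0 : (0:ℝ) ≤ x / p := by positivity
  have h1 : x / p ≤ Real.exp (x / p) := le_trans (by linarith) (Real.add_one_le_exp _)
  have h2 : (x / p) ^ p ≤ Real.exp x := by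
    calc (x / p) ^ p ≤ Real.exp (x / p) ^ p := Real.rpow_le_rpow h0 h1 hp.le
    _ = Real.exp (x / p * p) := (Real.exp_mul _ _).symm
    _ = Real.exp x := by rw [div_mul_cancel₀ _ hp.ne']
  have h3 : (0:ℝ) < (x / p) ^ p := Real.rpow_pos_of_pos (by positivity) _
  rw [Real.exp_neg]
  calc (Real.exp x)⁻¹ ≤ ((x / p) ^ p)⁻¹ := inv_anti₀ h3 h2
  _ = ((x / p)⁻¹) ^ p := (Real.inv_rpow (by positivity) _).symm
  _ = (p / x) ^ p := by rw [inv_div]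


set_option maxHeartbeats 1000000 in
/-- regime `1 ≤ t < L^{M d_w}` of the estimates following Theorem 4.1:
the reflected relativistic kernel satisfies the same two-sided bound
`R(t,r;·)` as the free relativistic kernel, with constants independent of `M`,
for all `M` larger than some `M₀`. -/
theorem stmt12 (α m K d dw dJ L c1 c2 c3 c4 c6 Cη A1 A2 A3 A4 : ℝ)
    (hα0 : 0 < α) (hα1 : α < 1) (hm : 0 < m)
    (hK : K = 2 * m ^ (1 - 1 / α))
    (hd : 0 < d) (hdw : 0 < dw) (hdJ : 1 < dJ) (hL : 1 < L)
    (hc1 : 0 < c1) (hc2 : 0 < c2) (hc3 : 0 < c3) (hc4 : 0 < c4) (hc6 : 0 < c6)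
    (hCη : 0 < Cη) (hA1 : 0 < A1) (hA2 : 0 < A2) (hA3 : 0 < A3) (hA4 : 0 < A4) :
    ∃ M0 : ℕ, ∃ C3 C4 C5 C6 : ℝ, 0 < C3 ∧ 0 < C4 ∧ 0 < C5 ∧ 0 < C6 ∧
      ∀ M : ℕ, M0 ≤ M →
      ∀ t : ℝ, 1 ≤ t → t < L ^ ((M : ℝ) * dw) →
      ∀ r : ℝ, 0 < r → r ≤ L ^ (M : ℝ) →
      ∀ η G : ℝ → ℝ, Measurable η → Measurable G →
        (∀ u, 0 < u → 0 ≤ η u) → (∀ s, 0 < s → 0 ≤ G s) →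
        (∀ u, 0 < u → η u ≤ Cη * t * u ^ (-1 - α)) →
        (∀ s, 0 < s → c1 * fprof d dw dJ c2 s r ≤ G s) →
        (∀ s, 0 < s → s < K * L ^ ((M : ℝ) * dw) → G s ≤ c3 * fprof d dw dJ c4 s r) →
        (∀ s, K * L ^ ((M : ℝ) * dw) ≤ s → G s ≤ c6 * L ^ (-((M : ℝ) * d))) →
        (A1 * Rprof d dw dJ A2 t r ≤ Phi d dw dJ α m η c2 t r) →
        (Phi d dw dJ α m η c4 t r ≤ A3 * Rprof d dw dJ A4 t r) →
        C3 * Rprof d dw dJ C4 t r ≤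
            Real.exp (m * t) *
              (∫ s in Ioi (0 : ℝ), G s * Real.exp (-(m ^ (1 / α)) * s) * η s) ∧
          Real.exp (m * t) *
              (∫ s in Ioi (0 : ℝ), G s * Real.exp (-(m ^ (1 / α)) * s) * η s) ≤
            C5 * Rprof d dw dJ C6 t r := by
  have hL0 : (0:ℝ) < L := by linarith
  have hk : 0 < m ^ (1 / α) := Real.rpow_pos_of_pos hm _
  set k : ℝ := m ^ (1 / α) with hkdef
  have hK0 : 0 < K := by rw [hK]; positivity
  have hdJ1 : 0 < dJ - 1 := by linarith
  have hβ : 0 < dw / (dJ - 1) := by positivity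
  set β : ℝ := dw / (dJ - 1) with hβdef
  set γ : ℝ := d / dw + 1 + α with hγdef
  have hγ : 0 < γ := by rw [hγdef]; positivity
  set p : ℝ := γ * dw / β with hpdef
  have hp : 0 < p := by rw [hpdef]; positivity
  have hLdw : 1 < L ^ dw :=
    (Real.one_lt_rpow_iff_of_pos hL0).mpr (Or.inl ⟨hL, hdw⟩)
  obtain ⟨M0, hM0⟩ := pow_unbounded_of_one_lt (K⁻¹) hLdw
  refine ⟨M0, c1 * A1, A2, c3 * A3 + 2 * c6 * Cη / (k * m), min A4 (m / 2),
    by positivity, hA2, by positivity, lt_min hA4 (by positivity), ?_⟩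
  intro M hM t ht1 htL r hr hrL η G hηm hGm hη0 hG0 hηb hGl hGu1 hGu2 hΦl hΦu
  have ht0 : (0:ℝ) < t := lt_of_lt_of_le one_pos ht1
  set X : ℝ := L ^ ((M : ℝ) * dw) with hXdef
  have hXpow : X = (L ^ dw) ^ M := by
    rw [hXdef, mul_comm, Real.rpow_mul hL0.le, Real.rpow_natCast]
  have hX0 : 0 < X := by rw [hXdef]; positivity
  set T : ℝ := K * X with hTdef
  have hT1 : 1 < T := by
    rw [hTdef, hXpow]
    calc (1:ℝ) = K * K⁻¹ := by rw [mul_inv_cancel₀ hK0.ne']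
    _ < K * (L ^ dw) ^ M0 := mul_lt_mul_of_pos_left hM0 hK0
    _ ≤ K * (L ^ dw) ^ M :=
        mul_le_mul_of_nonneg_left (pow_le_pow_right₀ (le_of_lt hLdw) hM) hK0.le
  have hT0 : 0 < T := lt_trans one_pos hT1
  -- pointwise constant bound for the fprof-type integrand
  have hfb : ∀ c' : ℝ, 0 < c' → ∀ s : ℝ, 0 < s →
      fprof d dw dJ c' s r * Real.exp (-k * s) * η s ≤
        p ^ p * c' ^ (-p) * r ^ (-(β * p)) * (Cη * t) := by
    intro c' hc' s hs
    have hsd : (0:ℝ) < s ^ (-(d / dw)) := Real.rpow_pos_of_pos hs _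
    have hy : (r / s ^ (1 / dw)) ^ β = r ^ β * s ^ (-(β / dw)) := by
      rw [div_eq_mul_inv, ← Real.rpow_neg hs.le,
        Real.mul_rpow hr.le (Real.rpow_pos_of_pos hs _).le,
        ← Real.rpow_mul hs.le, show -(1 / dw) * β = -(β / dw) by ring]
    have hx : (0:ℝ) < c' * (r ^ β * s ^ (-(β / dw))) := by positivity
    have hexpγ : -(β / dw) * -p = γ := by
      rw [hpdef, hβdef]; field_simp
    have hexp1 : Real.exp (-c' * (r / s ^ (1 / dw)) ^ β) ≤
        p ^ p * c' ^ (-p) * r ^ (-(β * p)) * s ^ γ := by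
      rw [hy, neg_mul]
      calc Real.exp (-(c' * (r ^ β * s ^ (-(β / dw)))))
          ≤ (p / (c' * (r ^ β * s ^ (-(β / dw))))) ^ p := exp_neg_le_rpow hx hp
      _ = p ^ p * c' ^ (-p) * r ^ (-(β * p)) * s ^ γ := by
          rw [div_eq_mul_inv, Real.mul_rpow hp.le (inv_nonneg.mpr hx.le),
            Real.inv_rpow hx.le, ← Real.rpow_neg hx.le,
            Real.mul_rpow hc'.le (by positivity),
            Real.mul_rpow (Real.rpow_nonneg hr.le _) (Real.rpow_nonneg hs.le _),
            ← Real.rpow_mul hr.le, ← Real.rpow_mul hs.le,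
            show β * -p = -(β * p) by ring, hexpγ]
          ring
    have hbnn : (0:ℝ) ≤ p ^ p * c' ^ (-p) * r ^ (-(β * p)) := by positivity
    have he1 : Real.exp (-k * s) ≤ 1 := by
      rw [Real.exp_le_one_iff, neg_mul]
      exact neg_nonpos.mpr (mul_nonneg hk.le hs.le)
    calc fprof d dw dJ c' s r * Real.exp (-k * s) * η s
        = s ^ (-(d / dw)) * Real.exp (-c' * (r / s ^ (1 / dw)) ^ β) *
            Real.exp (-k * s) * η s := by
          simp only [fprof, hβdef]
    _ ≤ s ^ (-(d / dw)) * (p ^ p * c' ^ (-p) * r ^ (-(β * p)) * s ^ γ) * 1 *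
          (Cη * t * s ^ (-1 - α)) := by
        have m1 := mul_le_mul_of_nonneg_left hexp1 hsd.le
        have m2 := mul_le_mul m1 he1 (Real.exp_nonneg _) (by positivity)
        exact mul_le_mul m2 (hηb s hs) (hη0 s hs) (by positivity)
    _ = p ^ p * c' ^ (-p) * r ^ (-(β * p)) * (Cη * t) *
          (s ^ (-(d / dw)) * s ^ γ * s ^ (-1 - α)) := by ring
    _ = p ^ p * c' ^ (-p) * r ^ (-(β * p)) * (Cη * t) := by
        rw [← Real.rpow_add hs, ← Real.rpow_add hs,
          show -(d / dw) + γ + (-1 - α) = 0 by rw [hγdef]; ring,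
          Real.rpow_zero, mul_one]
  have hmexp : Measurable fun s : ℝ => Real.exp (-k * s) :=
    (measurable_id.const_mul (-k)).exp
  have hmW : Measurable fun s : ℝ => G s * Real.exp (-k * s) * η s :=
    (hGm.mul hmexp).mul hηm
  have hmf : ∀ c' : ℝ, Measurable fun s : ℝ => fprof d dw dJ c' s r := by
    intro c'
    simp only [fprof]
    exact (measurable_id.pow measurable_const).mul
      ((((measurable_const.div (measurable_id.pow measurable_const)).pow
        measurable_const).const_mul _).exp)
  have hmF : ∀ c' : ℝ,
      Measurable fun s : ℝ => fprof d dw dJ c' s r * Real.exp (-k * s) * η s :=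
    fun c' => ((hmf c').mul hmexp).mul hηm
  have hfnn : ∀ (c' s : ℝ), 0 < s → 0 ≤ fprof d dw dJ c' s r := by
    intro c' s hs
    simp only [fprof]
    positivity
  have hWnn : ∀ s ∈ Ioi (0:ℝ), 0 ≤ G s * Real.exp (-k * s) * η s := fun s hs =>
    mul_nonneg (mul_nonneg (hG0 s hs) (Real.exp_nonneg _)) (hη0 s hs)
  have hFnn : ∀ (c' : ℝ), ∀ s ∈ Ioi (0:ℝ),
      0 ≤ fprof d dw dJ c' s r * Real.exp (-k * s) * η s := fun c' s hs =>
    mul_nonneg (mul_nonneg (hfnn c' s hs) (Real.exp_nonneg _)) (hη0 s hs)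
  -- pointwise tail bound
  have hptT : ∀ s : ℝ, T ≤ s → G s * Real.exp (-k * s) * η s ≤
      (c6 * L ^ (-((M:ℝ) * d)) * (Cη * t)) * Real.exp (-k * s) := by
    intro s hsT
    have hs0 : 0 < s := lt_of_lt_of_le hT0 hsT
    have hs1 : 1 ≤ s := le_trans hT1.le hsT
    calc G s * Real.exp (-k * s) * η s
        ≤ c6 * L ^ (-((M:ℝ) * d)) * Real.exp (-k * s) * (Cη * t * s ^ (-1 - α)) :=
          mul_le_mul (mul_le_mul_of_nonneg_right (hGu2 s hsT) (Real.exp_nonneg _))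
            (hηb s hs0) (hη0 s hs0) (by positivity)
    _ ≤ c6 * L ^ (-((M:ℝ) * d)) * Real.exp (-k * s) * (Cη * t * 1) := by
          refine mul_le_mul_of_nonneg_left ?_ (by positivity)
          exact mul_le_mul_of_nonneg_left
            (Real.rpow_le_one_of_one_le_of_nonpos hs1 (by linarith only [hα0])) (by positivity)
    _ = (c6 * L ^ (-((M:ℝ) * d)) * (Cη * t)) * Real.exp (-k * s) := by ring
  -- integrability of the G-integrand
  have hWIoo : IntegrableOn (fun s => G s * Real.exp (-k * s) * η s) (Ioo 0 T) := by
    refine Integrable.mono'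
      (g := fun _ => c3 * (p ^ p * c4 ^ (-p) * r ^ (-(β * p)) * (Cη * t)))
      (integrableOn_const measure_Ioo_lt_top.ne) hmW.aestronglyMeasurable ?_
    filter_upwards [ae_restrict_mem measurableSet_Ioo] with s hs
    rw [Real.norm_eq_abs, abs_of_nonneg (hWnn s hs.1)]
    calc G s * Real.exp (-k * s) * η s
        ≤ c3 * fprof d dw dJ c4 s r * Real.exp (-k * s) * η s :=
          mul_le_mul_of_nonneg_right
            (mul_le_mul_of_nonneg_right (hGu1 s hs.1 hs.2) (Real.exp_nonneg _))
            (hη0 s hs.1)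
    _ = c3 * (fprof d dw dJ c4 s r * Real.exp (-k * s) * η s) := by ring
    _ ≤ c3 * (p ^ p * c4 ^ (-p) * r ^ (-(β * p)) * (Cη * t)) :=
          mul_le_mul_of_nonneg_left (hfb c4 hc4 s hs.1) hc3.le
  have hWIci : IntegrableOn (fun s => G s * Real.exp (-k * s) * η s) (Ici T) := by
    rw [integrableOn_Ici_iff_integrableOn_Ioi]
    refine Integrable.mono'
      (g := fun s => (c6 * L ^ (-((M:ℝ) * d)) * (Cη * t)) * Real.exp (-k * s))
      ((exp_neg_integrableOn_Ioi T hk).const_mul _) hmW.aestronglyMeasurable ?_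
    filter_upwards [ae_restrict_mem measurableSet_Ioi] with s hs
    rw [Real.norm_eq_abs, abs_of_nonneg (hWnn s (lt_trans hT0 hs))]
    exact hptT s hs.le
  have hWI : IntegrableOn (fun s => G s * Real.exp (-k * s) * η s) (Ioi 0) := by
    rw [← Ioo_union_Ici_eq_Ioi hT0]
    exact hWIoo.union hWIci
  -- integrability of the fprof c4 integrand
  have hF4Ioo : IntegrableOn
      (fun s => fprof d dw dJ c4 s r * Real.exp (-k * s) * η s) (Ioo 0 T) := by
    refine Integrable.mono'
      (g := fun _ => p ^ p * c4 ^ (-p) * r ^ (-(β * p)) * (Cη * t))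
      (integrableOn_const measure_Ioo_lt_top.ne)
      (hmF c4).aestronglyMeasurable ?_
    filter_upwards [ae_restrict_mem measurableSet_Ioo] with s hs
    rw [Real.norm_eq_abs, abs_of_nonneg (hFnn c4 s hs.1)]
    exact hfb c4 hc4 s hs.1
  have hF4Ici : IntegrableOn
      (fun s => fprof d dw dJ c4 s r * Real.exp (-k * s) * η s) (Ici T) := by
    rw [integrableOn_Ici_iff_integrableOn_Ioi]
    refine Integrable.mono' (g := fun s => (Cη * t) * Real.exp (-k * s))
      ((exp_neg_integrableOn_Ioi T hk).const_mul _)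
      (hmF c4).aestronglyMeasurable ?_
    filter_upwards [ae_restrict_mem measurableSet_Ioi] with s hs
    have hs0 : 0 < s := lt_trans hT0 hs
    have hs1 : 1 ≤ s := le_trans hT1.le hs.le
    rw [Real.norm_eq_abs, abs_of_nonneg (hFnn c4 s hs0)]
    have hf1 : fprof d dw dJ c4 s r ≤ 1 := by
      simp only [fprof]
      calc s ^ (-(d / dw)) * Real.exp (-c4 * (r / s ^ (1 / dw)) ^ (dw / (dJ - 1)))
          ≤ s ^ (-(d / dw)) * 1 := by
            refine mul_le_mul_of_nonneg_left ?_ (Real.rpow_pos_of_pos hs0 _).le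
            rw [Real.exp_le_one_iff, neg_mul]
            exact neg_nonpos.mpr (mul_nonneg hc4.le (Real.rpow_nonneg (by positivity) _))
      _ ≤ 1 := by
            rw [mul_one]
            exact Real.rpow_le_one_of_one_le_of_nonpos hs1 (by positivity |> neg_nonpos.mpr)
    calc fprof d dw dJ c4 s r * Real.exp (-k * s) * η s
        ≤ 1 * Real.exp (-k * s) * (Cη * t * s ^ (-1 - α)) :=
          mul_le_mul (mul_le_mul_of_nonneg_right hf1 (Real.exp_nonneg _)) (hηb s hs0)
            (hη0 s hs0) (by positivity)
    _ ≤ 1 * Real.exp (-k * s) * (Cη * t * 1) := by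
          refine mul_le_mul_of_nonneg_left ?_ (by positivity)
          exact mul_le_mul_of_nonneg_left
            (Real.rpow_le_one_of_one_le_of_nonpos hs1 (by linarith only [hα0])) (by positivity)
    _ = Cη * t * Real.exp (-k * s) := by ring
  have hF4I : IntegrableOn
      (fun s => fprof d dw dJ c4 s r * Real.exp (-k * s) * η s) (Ioi 0) := by
    rw [← Ioo_union_Ici_eq_Ioi hT0]
    exact hF4Ioo.union hF4Ici
  -- integrability of the fprof c2 integrand
  have hF2I : IntegrableOn
      (fun s => fprof d dw dJ c2 s r * Real.exp (-k * s) * η s) (Ioi 0) := by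
    refine Integrable.mono'
      (g := fun s => c1⁻¹ * (G s * Real.exp (-k * s) * η s))
      (hWI.const_mul _) (hmF c2).aestronglyMeasurable ?_
    filter_upwards [ae_restrict_mem measurableSet_Ioi] with s hs
    rw [Real.norm_eq_abs, abs_of_nonneg (hFnn c2 s hs)]
    rw [le_inv_mul_iff₀ hc1]
    calc c1 * (fprof d dw dJ c2 s r * Real.exp (-k * s) * η s)
        = c1 * fprof d dw dJ c2 s r * Real.exp (-k * s) * η s := by ring
    _ ≤ G s * Real.exp (-k * s) * η s :=
          mul_le_mul_of_nonneg_right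
            (mul_le_mul_of_nonneg_right (hGl s hs) (Real.exp_nonneg _)) (hη0 s hs)
  -- splitting the integral
  have hdisj : Disjoint (Ioo (0:ℝ) T) (Ici T) :=
    disjoint_left.mpr fun s hs hs' => absurd hs.2 (not_lt.mpr hs')
  have hsplit : (∫ s in Ioi (0:ℝ), G s * Real.exp (-k * s) * η s)
      = (∫ s in Ioo (0:ℝ) T, G s * Real.exp (-k * s) * η s)
        + ∫ s in Ici T, G s * Real.exp (-k * s) * η s := by
    rw [← Ioo_union_Ici_eq_Ioi hT0]
    exact setIntegral_union hdisj measurableSet_Ici hWIoo hWIci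
  constructor
  · -- lower bound
    have hmono : (∫ s in Ioi (0:ℝ),
          c1 * (fprof d dw dJ c2 s r * Real.exp (-k * s) * η s))
        ≤ ∫ s in Ioi (0:ℝ), G s * Real.exp (-k * s) * η s := by
      refine setIntegral_mono_on (hF2I.const_mul c1) hWI measurableSet_Ioi ?_
      intro s hs
      calc c1 * (fprof d dw dJ c2 s r * Real.exp (-k * s) * η s)
          = c1 * fprof d dw dJ c2 s r * Real.exp (-k * s) * η s := by ring
      _ ≤ G s * Real.exp (-k * s) * η s :=
            mul_le_mul_of_nonneg_right
              (mul_le_mul_of_nonneg_right (hGl s hs) (Real.exp_nonneg _)) (hη0 s hs)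
    calc c1 * A1 * Rprof d dw dJ A2 t r
        ≤ c1 * Phi d dw dJ α m η c2 t r := by
          rw [mul_assoc]
          exact mul_le_mul_of_nonneg_left hΦl hc1.le
    _ = Real.exp (m * t) * ∫ s in Ioi (0:ℝ),
          c1 * (fprof d dw dJ c2 s r * Real.exp (-k * s) * η s) := by
          simp only [Phi]
          rw [← hkdef, integral_const_mul]
          ring
    _ ≤ Real.exp (m * t) * ∫ s in Ioi (0:ℝ), G s * Real.exp (-k * s) * η s :=
          mul_le_mul_of_nonneg_left hmono (Real.exp_nonneg _)
  · -- upper bound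
    have hmin0 : 0 ≤ min (r ^ (dw / dJ)) ((r * t ^ (-(1 / dw))) ^ β) :=
      le_min (Real.rpow_nonneg hr.le _) (Real.rpow_nonneg (by positivity) _)
    have hRmono : Rprof d dw dJ A4 t r ≤ Rprof d dw dJ (min A4 (m / 2)) t r := by
      simp only [Rprof]
      rw [← hβdef]
      refine mul_le_mul_of_nonneg_left (Real.exp_le_exp.mpr ?_)
        (Real.rpow_nonneg ht0.le _)
      exact mul_le_mul_of_nonneg_right (neg_le_neg (min_le_left _ _)) hmin0
    have hhead : (∫ s in Ioo (0:ℝ) T, G s * Real.exp (-k * s) * η s)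
        ≤ c3 * ∫ s in Ioi (0:ℝ), fprof d dw dJ c4 s r * Real.exp (-k * s) * η s := by
      calc (∫ s in Ioo (0:ℝ) T, G s * Real.exp (-k * s) * η s)
          ≤ ∫ s in Ioo (0:ℝ) T,
              c3 * (fprof d dw dJ c4 s r * Real.exp (-k * s) * η s) := by
            refine setIntegral_mono_on hWIoo
              ((hF4Ioo.const_mul c3)) measurableSet_Ioo ?_
            intro s hs
            calc G s * Real.exp (-k * s) * η s
                ≤ c3 * fprof d dw dJ c4 s r * Real.exp (-k * s) * η s :=
                  mul_le_mul_of_nonneg_right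
                    (mul_le_mul_of_nonneg_right (hGu1 s hs.1 hs.2) (Real.exp_nonneg _))
                    (hη0 s hs.1)
            _ = c3 * (fprof d dw dJ c4 s r * Real.exp (-k * s) * η s) := by ring
      _ ≤ ∫ s in Ioi (0:ℝ),
              c3 * (fprof d dw dJ c4 s r * Real.exp (-k * s) * η s) := by
            refine setIntegral_mono_set (hF4I.const_mul c3) ?_
              (HasSubset.Subset.eventuallyLE fun s hs => hs.1)
            filter_upwards [ae_restrict_mem measurableSet_Ioi] with s hs
            exact mul_nonneg hc3.le (hFnn c4 s hs)
      _ = c3 * ∫ s in Ioi (0:ℝ), fprof d dw dJ c4 s r * Real.exp (-k * s) * η s :=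
            integral_const_mul _ _
    have hexpint : (∫ s in Ioi T, Real.exp (-k * s)) = k⁻¹ * Real.exp (-(k * T)) := by
      have h := integral_comp_mul_left_Ioi (fun u => Real.exp (-u)) T hk
      simp only [neg_mul] at h ⊢
      rw [h, integral_exp_neg_Ioi, smul_eq_mul]
    have htail : (∫ s in Ici T, G s * Real.exp (-k * s) * η s)
        ≤ (c6 * L ^ (-((M:ℝ) * d)) * (Cη * t)) * (k⁻¹ * Real.exp (-(k * T))) := by
      rw [integral_Ici_eq_integral_Ioi]
      calc (∫ s in Ioi T, G s * Real.exp (-k * s) * η s)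
          ≤ ∫ s in Ioi T, (c6 * L ^ (-((M:ℝ) * d)) * (Cη * t)) * Real.exp (-k * s) := by
            refine setIntegral_mono_on (hWIci.mono_set Ioi_subset_Ici_self)
              ((exp_neg_integrableOn_Ioi T hk).const_mul _) measurableSet_Ioi ?_
            intro s hs
            exact hptT s hs.le
      _ = (c6 * L ^ (-((M:ℝ) * d)) * (Cη * t)) * (k⁻¹ * Real.exp (-(k * T))) := by
            rw [integral_const_mul, hexpint]
    have hkT : k * T = 2 * m * X := by
      have hmm' : k * m ^ (1 - 1 / α) = m := by
        rw [hkdef, ← Real.rpow_add hm, show 1 / α + (1 - 1 / α) = 1 by ring,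
          Real.rpow_one]
      calc k * T = k * m ^ (1 - 1 / α) * (2 * X) := by rw [hTdef, hK]; ring
      _ = 2 * m * X := by rw [hmm']; ring
    have h31 : t ^ (d / dw) ≤ L ^ ((M:ℝ) * d) := by
      calc t ^ (d / dw) ≤ X ^ (d / dw) :=
            Real.rpow_le_rpow ht0.le htL.le (by positivity)
      _ = L ^ ((M:ℝ) * d) := by
            rw [hXdef, ← Real.rpow_mul hL0.le]
            congr 1
            field_simp
    have h3 : L ^ (-((M:ℝ) * d)) ≤ t ^ (-(d / dw)) := by
      rw [Real.rpow_neg hL0.le, Real.rpow_neg ht0.le]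
      exact inv_anti₀ (Real.rpow_pos_of_pos ht0 _) h31
    have h1 : Real.exp (m * t - k * T) ≤ Real.exp (-(m * X)) := by
      rw [Real.exp_le_exp, hkT]
      have h0 := mul_le_mul_of_nonneg_left htL.le hm.le
      linarith only [h0]
    have h5 : min A4 (m / 2) * min (r ^ (dw / dJ)) ((r * t ^ (-(1 / dw))) ^ β)
        ≤ m / 2 * X := by
      calc min A4 (m / 2) * min (r ^ (dw / dJ)) ((r * t ^ (-(1 / dw))) ^ β)
          ≤ m / 2 * min (r ^ (dw / dJ)) ((r * t ^ (-(1 / dw))) ^ β) :=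
            mul_le_mul_of_nonneg_right (min_le_right _ _) hmin0
      _ ≤ m / 2 * r ^ (dw / dJ) :=
            mul_le_mul_of_nonneg_left (min_le_left _ _) (by positivity)
      _ ≤ m / 2 * (L ^ (M:ℝ)) ^ (dw / dJ) :=
            mul_le_mul_of_nonneg_left
              (Real.rpow_le_rpow hr.le hrL (by positivity)) (by positivity)
      _ = m / 2 * L ^ ((M:ℝ) * (dw / dJ)) := by rw [← Real.rpow_mul hL0.le]
      _ ≤ m / 2 * X := by
            rw [hXdef]
            refine mul_le_mul_of_nonneg_left
              (Real.rpow_le_rpow_of_exponent_le hL.le ?_) (by positivity)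
            exact mul_le_mul_of_nonneg_left (div_le_self hdw.le (by linarith only [hdJ]))
              (Nat.cast_nonneg _)
    have h45 : X * Real.exp (-(m * X)) ≤ 2 / m * Real.exp
        (-(min A4 (m / 2) * min (r ^ (dw / dJ)) ((r * t ^ (-(1 / dw))) ^ β))) := by
      have h41 : X ≤ 2 / m * Real.exp (m / 2 * X) := by
        have h := Real.add_one_le_exp (m / 2 * X)
        rw [div_mul_eq_mul_div, le_div_iff₀ hm]
        linarith only [h, Real.exp_pos (m / 2 * X)]
      calc X * Real.exp (-(m * X))
          ≤ 2 / m * Real.exp (m / 2 * X) * Real.exp (-(m * X)) :=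
            mul_le_mul_of_nonneg_right h41 (Real.exp_nonneg _)
      _ = 2 / m * Real.exp (-(m / 2 * X)) := by
            rw [mul_assoc, ← Real.exp_add, show m / 2 * X + -(m * X) = -(m / 2 * X) by ring]
      _ ≤ 2 / m * Real.exp
            (-(min A4 (m / 2) * min (r ^ (dw / dJ)) ((r * t ^ (-(1 / dw))) ^ β))) := by
            refine mul_le_mul_of_nonneg_left (Real.exp_le_exp.mpr ?_) (by positivity)
            linarith only [h5]
    have hPhiPart : Real.exp (m * t) *
        (c3 * ∫ s in Ioi (0:ℝ), fprof d dw dJ c4 s r * Real.exp (-k * s) * η s)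
        ≤ c3 * (A3 * Rprof d dw dJ A4 t r) := by
      have heq : Real.exp (m * t) *
          (c3 * ∫ s in Ioi (0:ℝ), fprof d dw dJ c4 s r * Real.exp (-k * s) * η s)
          = c3 * Phi d dw dJ α m η c4 t r := by
        simp only [Phi]
        rw [← hkdef]
        ring
      rw [heq]
      exact mul_le_mul_of_nonneg_left hΦu hc3.le
    have hTailPart : Real.exp (m * t) *
        ((c6 * L ^ (-((M:ℝ) * d)) * (Cη * t)) * (k⁻¹ * Real.exp (-(k * T))))
        ≤ 2 * c6 * Cη / (k * m) * Rprof d dw dJ (min A4 (m / 2)) t r := by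
      calc Real.exp (m * t) *
          ((c6 * L ^ (-((M:ℝ) * d)) * (Cη * t)) * (k⁻¹ * Real.exp (-(k * T))))
          = c6 * Cη * k⁻¹ *
              (L ^ (-((M:ℝ) * d)) * (t * Real.exp (m * t - k * T))) := by
            rw [show m * t - k * T = m * t + -(k * T) by ring, Real.exp_add]
            ring
      _ ≤ c6 * Cη * k⁻¹ * (t ^ (-(d / dw)) * (X * Real.exp (-(m * X)))) := by
            refine mul_le_mul_of_nonneg_left ?_ (by positivity)
            exact mul_le_mul h3
              (mul_le_mul htL.le h1 (Real.exp_nonneg _) hX0.le)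
              (mul_nonneg ht0.le (Real.exp_nonneg _))
              (Real.rpow_nonneg ht0.le _)
      _ ≤ c6 * Cη * k⁻¹ * (t ^ (-(d / dw)) * (2 / m * Real.exp
            (-(min A4 (m / 2) * min (r ^ (dw / dJ)) ((r * t ^ (-(1 / dw))) ^ β))))) :=
            mul_le_mul_of_nonneg_left
              (mul_le_mul_of_nonneg_left h45 (Real.rpow_nonneg ht0.le _))
              (by positivity)
      _ = 2 * c6 * Cη / (k * m) * Rprof d dw dJ (min A4 (m / 2)) t r := by
            simp only [Rprof]
            rw [← hβdef]
            simp only [neg_mul]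
            field_simp
    calc Real.exp (m * t) * ∫ s in Ioi (0:ℝ), G s * Real.exp (-k * s) * η s
        = Real.exp (m * t) * (∫ s in Ioo (0:ℝ) T, G s * Real.exp (-k * s) * η s)
          + Real.exp (m * t) * ∫ s in Ici T, G s * Real.exp (-k * s) * η s := by
          rw [hsplit]; ring
    _ ≤ Real.exp (m * t) *
          (c3 * ∫ s in Ioi (0:ℝ), fprof d dw dJ c4 s r * Real.exp (-k * s) * η s)
        + Real.exp (m * t) *
          ((c6 * L ^ (-((M:ℝ) * d)) * (Cη * t)) * (k⁻¹ * Real.exp (-(k * T)))) :=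
          add_le_add (mul_le_mul_of_nonneg_left hhead (Real.exp_nonneg _))
            (mul_le_mul_of_nonneg_left htail (Real.exp_nonneg _))
    _ ≤ c3 * (A3 * Rprof d dw dJ A4 t r)
        + 2 * c6 * Cη / (k * m) * Rprof d dw dJ (min A4 (m / 2)) t r :=
          add_le_add hPhiPart hTailPart
    _ ≤ c3 * A3 * Rprof d dw dJ (min A4 (m / 2)) t r
        + 2 * c6 * Cη / (k * m) * Rprof d dw dJ (min A4 (m / 2)) t r := by
          refine add_le_add ?_ le_rfl
          rw [← mul_assoc]
          exact mul_le_mul_of_nonneg_left hRmono (by positivity)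
    _ = (c3 * A3 + 2 * c6 * Cη / (k * m)) * Rprof d dw dJ (min A4 (m / 2)) t r := by
          ring
end

section
/- Let α ∈ (0,1), m > 0 with K := 2·m^{1−1/α}, let d, d_w > 0, d_J > 1, L > 1, and let c_1, c_2, c_3, c_4, c_6, C_η, A_5, A_6, A_7, A_8 > 0 be constants. For c > 0, t > 0, ρ > 0 and measurable η : (0,∞) → [0,∞), set Φ_c(t,ρ) := e^{mt}·∫_0^∞ f_c(s,ρ)·e^{−m^{1/α} s}·η(s) ds. Then there exist a nonnegative integer M_0 and constants C_7, C_8, C_9, C_10 > 0 depending only on the listed constants such that: for every integer M ≥ M_0, every t ∈ (0,1), every r with 1 ≤ r ≤ L^M, and all measurable η, G : (0,∞) → [0,∞) satisfying (i) η(u) ≤ C_η·t·u^{−1−α} for all u > 0; (ii) c_1·f_{c_2}(s,r) ≤ G(s) for all s > 0, G(s) ≤ c_3·f_{c_4}(s,r) for 0 < s < K·L^{M d_w}, and G(s) ≤ c_6·L^{−Md} for s ≥ K·L^{M d_w}; (iii) A_5·t·e^{−A_6·r^{d_w/d_J}} ≤ Φ_{c_2}(t,r) and Φ_{c_4}(t,r)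 ≤ A_7·t·e^{−A_8·r^{d_w/d_J}}; one has C_7·t·e^{−C_8·r^{d_w/d_J}} ≤ e^{mt}·∫_0^∞ G(s)·e^{−m^{1/α} s}·η(s) ds ≤ C_9·t·e^{−C_10·r^{d_w/d_J}}. -/
open MeasureTheory Set

set_option maxHeartbeats 1000000 in
lemma aux_exp_neg_le {y : ℝ} (hy : 0 < y) (n : ℕ) (hn : n ≠ 0) :
    Real.exp (-y) ≤ ((n : ℝ) / y) ^ n := by
  have hn' : (0:ℝ) < n := by exact_mod_cast Nat.pos_of_ne_zero hn
  have h1 : Real.exp (-y) = (Real.exp (-(y / n))) ^ n := by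
    rw [← Real.exp_nat_mul]
    congr 1
    field_simp
  rw [h1]
  apply pow_le_pow_left₀ (Real.exp_nonneg _)
  have h2 : y / n ≤ Real.exp (y / n) := by
    have := Real.add_one_le_exp (y / n)
    linarith
  have h3 : Real.exp (-(y / n)) ≤ (y / n)⁻¹ := by
    rw [Real.exp_neg]
    exact inv_anti₀ (by positivity) h2
  rw [inv_div] at h3
  exact h3

lemma aux_integrable (a c q b : ℝ) (ha : a ≤ 0) (hc : 0 < c) (hq : 0 < q) (hb : 0 < b) :
    IntegrableOn (fun s : ℝ => s ^ a * Real.exp (-(c * s ^ (-q))) * Real.exp (-(b * s)))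
      (Ioi (0:ℝ)) := by
  have hmeas : Measurable (fun s : ℝ => s ^ a * Real.exp (-(c * s ^ (-q))) * Real.exp (-(b * s))) := by
    fun_prop
  rw [show Ioi (0:ℝ) = Ioc 0 1 ∪ Ioi 1 from (Ioc_union_Ioi_eq_Ioi zero_le_one).symm]
  apply IntegrableOn.union
  · set n : ℕ := ⌈(-a) / q⌉₊ + 1 with hn
    have hnq : 0 ≤ a + n * q := by
      have h1 : (-a) / q ≤ (n : ℝ) := by
        refine le_trans (Nat.le_ceil _) ?_
        push_cast [hn]; linarith
      rw [div_le_iff₀ hq] at h1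
      linarith
    refine Integrable.mono' (g := fun _ => ((n:ℝ)/c)^n)
      (integrableOn_const measure_Ioc_lt_top.ne) hmeas.aestronglyMeasurable ?_
    filter_upwards [ae_restrict_mem measurableSet_Ioc] with s hs
    obtain ⟨hs0, hs1⟩ := hs
    have hx : 0 < c * s ^ (-q) := by positivity
    have key : s ^ a * Real.exp (-(c * s ^ (-q))) ≤ ((n:ℝ)/c)^n := by
      calc s ^ a * Real.exp (-(c * s ^ (-q)))
          ≤ s ^ a * ((n:ℝ) / (c * s ^ (-q))) ^ n := by
            exact mul_le_mul_of_nonneg_left (aux_exp_neg_le hx n (by simp [hn]))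
              (Real.rpow_nonneg hs0.le _)
        _ = ((n:ℝ)/c)^n * s ^ (a + n * q) := by
            rw [Real.rpow_neg hs0.le]
            rw [show (n:ℝ) / (c * (s ^ q)⁻¹) = ((n:ℝ)/c) * s ^ q by
              field_simp]
            rw [mul_pow, ← Real.rpow_natCast (s ^ q) n, ← Real.rpow_mul hs0.le,
              Real.rpow_add hs0]
            ring_nf
        _ ≤ ((n:ℝ)/c)^n * 1 := by
            refine mul_le_mul_of_nonneg_left (Real.rpow_le_one hs0.le hs1 hnq) (by positivity)
        _ = ((n:ℝ)/c)^n := mul_one _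
    have hnorm : ‖s ^ a * Real.exp (-(c * s ^ (-q))) * Real.exp (-(b * s))‖
        = s ^ a * Real.exp (-(c * s ^ (-q))) * Real.exp (-(b * s)) := by
      rw [Real.norm_eq_abs, abs_of_nonneg]; positivity
    rw [hnorm]
    calc s ^ a * Real.exp (-(c * s ^ (-q))) * Real.exp (-(b * s))
        ≤ s ^ a * Real.exp (-(c * s ^ (-q))) * 1 := by
          refine mul_le_mul_of_nonneg_left
            (Real.exp_le_one_iff.mpr (neg_nonpos.mpr (by positivity))) ?_
          positivity
      _ ≤ ((n:ℝ)/c)^n := by rw [mul_one]; exact key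
  · refine Integrable.mono' (exp_neg_integrableOn_Ioi 1 hb) hmeas.aestronglyMeasurable ?_
    filter_upwards [ae_restrict_mem measurableSet_Ioi] with s hs
    have hs1 : (1:ℝ) ≤ s := le_of_lt hs
    have hs0 : (0:ℝ) < s := lt_of_lt_of_le zero_lt_one hs1
    have hnorm : ‖s ^ a * Real.exp (-(c * s ^ (-q))) * Real.exp (-(b * s))‖
        = s ^ a * Real.exp (-(c * s ^ (-q))) * Real.exp (-(b * s)) := by
      rw [Real.norm_eq_abs, abs_of_nonneg]; positivity
    rw [hnorm, neg_mul b s]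
    have e1 : s ^ a ≤ 1 := Real.rpow_le_one_of_one_le_of_nonpos hs1 ha
    have e2 : Real.exp (-(c * s ^ (-q))) ≤ 1 :=
      Real.exp_le_one_iff.mpr (neg_nonpos.mpr (by positivity))
    have e3 : s ^ a * Real.exp (-(c * s ^ (-q))) ≤ 1 :=
      mul_le_one₀ e1 (Real.exp_nonneg _) e2
    calc s ^ a * Real.exp (-(c * s ^ (-q))) * Real.exp (-(b * s))
        ≤ 1 * Real.exp (-(b * s)) := mul_le_mul_of_nonneg_right e3 (Real.exp_nonneg _)
      _ = Real.exp (-(b * s)) := one_mul _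

lemma aux_fprof_le (d dw dJ c : ℝ) (hdw : 0 < dw) (hdJ : 1 < dJ) (hc : 0 < c)
    {s r : ℝ} (hs : 0 < s) (hr : 1 ≤ r) :
    fprof d dw dJ c s r ≤ s ^ (-(d / dw)) * Real.exp (-(c * s ^ (-(1/(dJ-1))))) := by
  unfold fprof
  refine mul_le_mul_of_nonneg_left ?_ (Real.rpow_nonneg hs.le _)
  apply Real.exp_le_exp.mpr
  have hsp : 0 < s ^ (1/dw) := Real.rpow_pos_of_pos hs _
  have hdJ1 : (0:ℝ) < dJ - 1 := by linarith
  have hp0 : 0 ≤ dw / (dJ - 1) := by positivity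
  have h1 : (r / s ^ (1/dw)) ^ (dw/(dJ-1)) = r ^ (dw/(dJ-1)) * s ^ (-(1/(dJ-1))) := by
    rw [Real.div_rpow (by linarith) hsp.le, ← Real.rpow_mul hs.le,
      show (1/dw) * (dw/(dJ-1)) = 1/(dJ-1) by field_simp,
      div_eq_mul_inv, ← Real.rpow_neg hs.le]
  rw [h1]
  have h2 : 1 ≤ r ^ (dw/(dJ-1)) := Real.one_le_rpow hr hp0
  have h3 : 0 < s ^ (-(1/(dJ-1))) := Real.rpow_pos_of_pos hs _
  have h4 : c * s ^ (-(1/(dJ-1))) * 1 ≤ c * s ^ (-(1/(dJ-1))) * r ^ (dw/(dJ-1)) :=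
    mul_le_mul_of_nonneg_left h2 (by positivity)
  calc -c * (r ^ (dw/(dJ-1)) * s ^ (-(1/(dJ-1))))
      = -(c * s ^ (-(1/(dJ-1))) * r ^ (dw/(dJ-1))) := by ring
    _ ≤ -(c * s ^ (-(1/(dJ-1))) * 1) := neg_le_neg h4
    _ = -(c * s ^ (-(1/(dJ-1)))) := by ring

set_option maxHeartbeats 1000000 in
/-- regime `t ∈ (0,1)`, `1 ≤ r ≤ L^M` of the estimates following
Theorem 4.1: the reflected relativistic kernel satisfies the same two-sided
bound `t e^{-c r^{d_w/d_J}}` as the free relativistic kernel, with constants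
independent of `M`, for all `M` larger than some `M₀`. -/
theorem stmt13 (α m K d dw dJ L c1 c2 c3 c4 c6 Cη A5 A6 A7 A8 : ℝ)
    (hα0 : 0 < α) (hα1 : α < 1) (hm : 0 < m)
    (hK : K = 2 * m ^ (1 - 1 / α))
    (hd : 0 < d) (hdw : 0 < dw) (hdJ : 1 < dJ) (hL : 1 < L)
    (hc1 : 0 < c1) (hc2 : 0 < c2) (hc3 : 0 < c3) (hc4 : 0 < c4) (hc6 : 0 < c6)
    (hCη : 0 < Cη) (hA5 : 0 < A5) (hA6 : 0 < A6) (hA7 : 0 < A7) (hA8 : 0 < A8) :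
    ∃ M0 : ℕ, ∃ C7 C8 C9 C10 : ℝ, 0 < C7 ∧ 0 < C8 ∧ 0 < C9 ∧ 0 < C10 ∧
      ∀ M : ℕ, M0 ≤ M →
      ∀ t : ℝ, 0 < t → t < 1 →
      ∀ r : ℝ, 1 ≤ r → r ≤ L ^ (M : ℝ) →
      ∀ η G : ℝ → ℝ, Measurable η → Measurable G →
        (∀ u, 0 < u → 0 ≤ η u) → (∀ s, 0 < s → 0 ≤ G s) →
        (∀ u, 0 < u → η u ≤ Cη * t * u ^ (-1 - α)) →
        (∀ s, 0 < s → c1 * fprof d dw dJ c2 s r ≤ G s) →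
        (∀ s, 0 < s → s < K * L ^ ((M : ℝ) * dw) → G s ≤ c3 * fprof d dw dJ c4 s r) →
        (∀ s, K * L ^ ((M : ℝ) * dw) ≤ s → G s ≤ c6 * L ^ (-((M : ℝ) * d))) →
        (A5 * t * Real.exp (-A6 * r ^ (dw / dJ)) ≤ Phi d dw dJ α m η c2 t r) →
        (Phi d dw dJ α m η c4 t r ≤ A7 * t * Real.exp (-A8 * r ^ (dw / dJ))) →
        C7 * t * Real.exp (-C8 * r ^ (dw / dJ)) ≤
            Real.exp (m * t) *
              (∫ s in Ioi (0 : ℝ), G s * Real.exp (-(m ^ (1 / α)) * s) * η s) ∧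
          Real.exp (m * t) *
              (∫ s in Ioi (0 : ℝ), G s * Real.exp (-(m ^ (1 / α)) * s) * η s) ≤
            C9 * t * Real.exp (-C10 * r ^ (dw / dJ)) := by
  have hK0 : 0 < K := by rw [hK]; positivity
  have hKα : 0 < K ^ (-α) := Real.rpow_pos_of_pos hK0 _
  refine ⟨0, c1 * A5, A6, c3 * A7 + Real.exp m * c6 * Cη * K ^ (-α) / α, min A8 (2*m),
    by positivity, hA6, by positivity, lt_min hA8 (by linarith), ?_⟩
  intro M _ t ht0 ht1 r hr1 hrL η G hηm hGm hη0 hG0 hηb hGl hGu hGt hPhiL hPhiU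
  set b := m ^ (1/α) with hbdef
  have hb : 0 < b := Real.rpow_pos_of_pos hm _
  have hL0 : (0:ℝ) < L := lt_trans zero_lt_one hL
  have hLM1 : 1 ≤ L ^ ((M:ℝ) * dw) := Real.one_le_rpow hL.le (by positivity)
  set S := K * L ^ ((M:ℝ) * dw) with hSdef
  have hS0 : 0 < S := mul_pos hK0 (lt_of_lt_of_le zero_lt_one hLM1)
  have hdJ1 : (0:ℝ) < dJ - 1 := by linarith
  set qq := 1/(dJ-1) with hqqdef
  have hqq : 0 < qq := by positivity
  set aa := -(d/dw) + (-1 - α) with haadef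
  have haa : aa ≤ 0 := by
    have h1 : 0 < d/dw := div_pos hd hdw
    rw [haadef]; linarith
  set rp := r ^ (dw/dJ) with hrpdef
  have hrp0 : 0 ≤ rp := Real.rpow_nonneg (by linarith) _
  -- master integrable family
  have hF0 : ∀ c : ℝ, 0 < c → IntegrableOn
      (fun s : ℝ => s ^ aa * Real.exp (-(c * s ^ (-qq))) * Real.exp (-(b * s))) (Ioi 0) :=
    fun c hc => aux_integrable aa c qq b haa hc hqq hb
  -- pointwise bound for fprof-type integrands
  have hptf : ∀ c : ℝ, 0 < c → ∀ s : ℝ, s ∈ Ioi (0:ℝ) →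
      fprof d dw dJ c s r * Real.exp (-(m ^ (1/α)) * s) * η s
        ≤ (Cη * t) * (s ^ aa * Real.exp (-(c * s ^ (-qq))) * Real.exp (-(b * s))) := by
    intro c hc s hs
    rw [mem_Ioi] at hs
    have h1 := aux_fprof_le d dw dJ c hdw hdJ hc hs hr1
    have h2 := hηb s hs
    have h3 := hη0 s hs
    have hfnn : 0 ≤ fprof d dw dJ c s r := by
      unfold fprof; positivity
    have hw : Real.exp (-(m ^ (1/α)) * s) = Real.exp (-(b*s)) := by rw [neg_mul]
    rw [hw]
    calc fprof d dw dJ c s r * Real.exp (-(b*s)) * η s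
        ≤ (s ^ (-(d/dw)) * Real.exp (-(c * s ^ (-qq)))) * Real.exp (-(b*s))
            * (Cη * t * s ^ (-1-α)) := by
          refine mul_le_mul (mul_le_mul_of_nonneg_right h1 (Real.exp_nonneg _)) h2 h3 ?_
          positivity
      _ = (Cη * t) * (s ^ aa * Real.exp (-(c * s ^ (-qq))) * Real.exp (-(b * s))) := by
          rw [haadef, Real.rpow_add hs]
          ring_nf
  -- measurability of fprof-type integrands
  have hfm : ∀ c : ℝ, Measurable (fun s : ℝ =>
      fprof d dw dJ c s r * Real.exp (-(m ^ (1/α)) * s) * η s) := by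
    intro c
    unfold fprof
    fun_prop
  -- integrability of fprof-type integrands
  have hintf : ∀ c : ℝ, 0 < c → IntegrableOn
      (fun s : ℝ => fprof d dw dJ c s r * Real.exp (-(m ^ (1/α)) * s) * η s) (Ioi 0) := by
    intro c hc
    refine Integrable.mono' ((hF0 c hc).const_mul (Cη * t)) (hfm c).aestronglyMeasurable ?_
    filter_upwards [ae_restrict_mem measurableSet_Ioi] with s hs
    have hs' : 0 < s := hs
    have hfnn : 0 ≤ fprof d dw dJ c s r := by unfold fprof; positivity
    have hnn : 0 ≤ fprof d dw dJ c s r * Real.exp (-(m ^ (1/α)) * s) * η s :=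
      mul_nonneg (mul_nonneg hfnn (Real.exp_nonneg _)) (hη0 s hs')
    rw [Real.norm_eq_abs, abs_of_nonneg hnn]
    exact hptf c hc s hs
  -- the main integrand
  set F := fun s : ℝ => G s * Real.exp (-(m ^ (1/α)) * s) * η s with hFdef
  have hFnn : ∀ s ∈ Ioi (0:ℝ), 0 ≤ F s := fun s hs =>
    mul_nonneg (mul_nonneg (hG0 s hs) (Real.exp_nonneg _)) (hη0 s hs)
  set Bc := c6 * L ^ (-((M:ℝ) * d)) * (Cη * t * S ^ (-1 - α)) with hBcdef
  have hBc0 : 0 ≤ Bc := by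
    have := Real.rpow_nonneg hS0.le (-1-α)
    have := Real.rpow_nonneg hL0.le (-((M:ℝ)*d))
    rw [hBcdef]; positivity
  have hFbound : ∀ s ∈ Ioi (0:ℝ), F s ≤
      c3 * ((Cη * t) * (s ^ aa * Real.exp (-(c4 * s ^ (-qq))) * Real.exp (-(b * s))))
        + Bc * Real.exp (-(b * s)) := by
    intro s hs
    have hs' : 0 < s := hs
    rcases lt_or_ge s S with hcase | hcase
    · have h1 := hGu s hs' hcase
      have step : F s ≤ c3 * (fprof d dw dJ c4 s r * Real.exp (-(m ^ (1/α)) * s) * η s) := by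
        have := mul_le_mul_of_nonneg_right
          (mul_le_mul_of_nonneg_right h1 (Real.exp_nonneg (-(m ^ (1/α)) * s))) (hη0 s hs')
        calc F s = G s * Real.exp (-(m ^ (1/α)) * s) * η s := rfl
          _ ≤ c3 * fprof d dw dJ c4 s r * Real.exp (-(m ^ (1/α)) * s) * η s := this
          _ = c3 * (fprof d dw dJ c4 s r * Real.exp (-(m ^ (1/α)) * s) * η s) := by ring
      refine le_trans step (le_trans (mul_le_mul_of_nonneg_left (hptf c4 hc4 s hs) hc3.le) ?_)
      refine le_add_of_nonneg_right (mul_nonneg hBc0 (Real.exp_nonneg _))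
    · have h1 := hGt s hcase
      have hSle : s ^ (-1 - α) ≤ S ^ (-1 - α) :=
        Real.rpow_le_rpow_of_nonpos hS0 hcase (by linarith)
      have hGnn := hG0 s hs'
      have hbound : F s ≤ Bc * Real.exp (-(b*s)) := by
        calc F s = G s * Real.exp (-(m ^ (1/α)) * s) * η s := rfl
          _ ≤ (c6 * L ^ (-((M:ℝ)*d))) * Real.exp (-(m ^ (1/α)) * s) * (Cη * t * s ^ (-1-α)) := by
              refine mul_le_mul (mul_le_mul_of_nonneg_right h1 (Real.exp_nonneg _))
                (hηb s hs') (hη0 s hs') ?_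
              have h2 : 0 ≤ L ^ (-((M:ℝ)*d)) := Real.rpow_nonneg hL0.le _
              positivity
          _ ≤ (c6 * L ^ (-((M:ℝ)*d))) * Real.exp (-(m ^ (1/α)) * s) * (Cη * t * S ^ (-1-α)) := by
              have h2 : 0 ≤ L ^ (-((M:ℝ)*d)) := Real.rpow_nonneg hL0.le _
              have h3 : Cη * t * s ^ (-1-α) ≤ Cη * t * S ^ (-1-α) :=
                mul_le_mul_of_nonneg_left hSle (by positivity)
              refine mul_le_mul_of_nonneg_left h3 ?_
              positivity
          _ = Bc * Real.exp (-(b*s)) := by rw [hBcdef, neg_mul]; ring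
      refine le_trans hbound (le_add_of_nonneg_left ?_)
      have h4 : 0 ≤ (Cη * t) * (s ^ aa * Real.exp (-(c4 * s ^ (-qq))) * Real.exp (-(b * s))) := by
        have := Real.rpow_nonneg hs'.le aa
        positivity
      positivity
  have hexpint : IntegrableOn (fun s : ℝ => Bc * Real.exp (-(b*s))) (Ioi (0:ℝ)) := by
    have := (exp_neg_integrableOn_Ioi 0 hb).const_mul Bc
    simp only [neg_mul] at this
    exact this
  have hFint : IntegrableOn F (Ioi (0:ℝ)) := by
    refine Integrable.mono' ((((hF0 c4 hc4).const_mul (Cη*t)).const_mul c3).add hexpint)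
      ?_ ?_
    · exact ((hGm.mul (by fun_prop)).mul hηm).aestronglyMeasurable
    · filter_upwards [ae_restrict_mem measurableSet_Ioi] with s hs
      rw [Real.norm_eq_abs, abs_of_nonneg (hFnn s hs)]
      exact hFbound s hs
  -- LOWER BOUND
  have hlow : ∫ s in Ioi (0:ℝ),
        c1 * (fprof d dw dJ c2 s r * Real.exp (-(m ^ (1/α)) * s) * η s)
      ≤ ∫ s in Ioi (0:ℝ), F s := by
    refine setIntegral_mono_on ((hintf c2 hc2).const_mul c1) hFint measurableSet_Ioi ?_
    intro s hs
    have hs' : 0 < s := hs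
    have h1 := hGl s hs'
    calc c1 * (fprof d dw dJ c2 s r * Real.exp (-(m ^ (1/α)) * s) * η s)
        = (c1 * fprof d dw dJ c2 s r) * Real.exp (-(m ^ (1/α)) * s) * η s := by ring
      _ ≤ G s * Real.exp (-(m ^ (1/α)) * s) * η s :=
          mul_le_mul_of_nonneg_right
            (mul_le_mul_of_nonneg_right h1 (Real.exp_nonneg _)) (hη0 s hs')
      _ = F s := rfl
  constructor
  · calc c1 * A5 * t * Real.exp (-A6 * rp)
        = c1 * (A5 * t * Real.exp (-A6 * rp)) := by ring
      _ ≤ c1 * Phi d dw dJ α m η c2 t r := mul_le_mul_of_nonneg_left hPhiL hc1.le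
      _ = Real.exp (m*t) * ∫ s in Ioi (0:ℝ),
            c1 * (fprof d dw dJ c2 s r * Real.exp (-(m ^ (1/α)) * s) * η s) := by
          simp only [Phi]
          rw [integral_const_mul]
          ring
      _ ≤ Real.exp (m*t) * ∫ s in Ioi (0:ℝ), F s :=
          mul_le_mul_of_nonneg_left hlow (Real.exp_pos _).le
  -- UPPER BOUND
  · have hdisj : Disjoint (Ioo (0:ℝ) S) (Ici S) :=
      disjoint_left.mpr fun x hx hx' => absurd hx.2 (not_lt.mpr hx')
    have hsplit : ∫ s in Ioi (0:ℝ), F s = (∫ s in Ioo 0 S, F s) + ∫ s in Ici S, F s := by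
      rw [← Ioo_union_Ici_eq_Ioi hS0]
      exact setIntegral_union hdisj measurableSet_Ici
        (hFint.mono_set Ioo_subset_Ioi_self) (hFint.mono_set (Ici_subset_Ioi.mpr hS0))
    have hup1 : ∫ s in Ioo 0 S, F s ≤
        c3 * ∫ s in Ioi (0:ℝ), fprof d dw dJ c4 s r * Real.exp (-(m ^ (1/α)) * s) * η s := by
      have e1 : ∫ s in Ioo 0 S, F s ≤ ∫ s in Ioo 0 S,
          c3 * (fprof d dw dJ c4 s r * Real.exp (-(m ^ (1/α)) * s) * η s) := by
        have hc3int : IntegrableOn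
            (fun s : ℝ => c3 * (fprof d dw dJ c4 s r * Real.exp (-(m ^ (1/α)) * s) * η s))
            (Ioi (0:ℝ)) := (hintf c4 hc4).const_mul c3
        refine setIntegral_mono_on (hFint.mono_set Ioo_subset_Ioi_self)
          (hc3int.mono_set Ioo_subset_Ioi_self) measurableSet_Ioo ?_
        intro s hs
        have h1 := hGu s hs.1 hs.2
        calc F s = G s * Real.exp (-(m ^ (1/α)) * s) * η s := rfl
          _ ≤ c3 * fprof d dw dJ c4 s r * Real.exp (-(m ^ (1/α)) * s) * η s :=
              mul_le_mul_of_nonneg_right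
                (mul_le_mul_of_nonneg_right h1 (Real.exp_nonneg _)) (hη0 s hs.1)
          _ = c3 * (fprof d dw dJ c4 s r * Real.exp (-(m ^ (1/α)) * s) * η s) := by ring
      have e2 : ∫ s in Ioo 0 S,
            c3 * (fprof d dw dJ c4 s r * Real.exp (-(m ^ (1/α)) * s) * η s)
          ≤ ∫ s in Ioi (0:ℝ),
            c3 * (fprof d dw dJ c4 s r * Real.exp (-(m ^ (1/α)) * s) * η s) := by
        have hc3int : IntegrableOn
            (fun s : ℝ => c3 * (fprof d dw dJ c4 s r * Real.exp (-(m ^ (1/α)) * s) * η s))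
            (Ioi (0:ℝ)) := (hintf c4 hc4).const_mul c3
        refine setIntegral_mono_set hc3int ?_
          (HasSubset.Subset.eventuallyLE Ioo_subset_Ioi_self)
        filter_upwards [ae_restrict_mem measurableSet_Ioi] with s hs
        have hs' : (0:ℝ) < s := hs
        have hfnn : 0 ≤ fprof d dw dJ c4 s r := by unfold fprof; positivity
        have := hη0 s hs'
        positivity
      simp only [integral_const_mul] at e1 e2
      linarith
    have hup2 : ∫ s in Ici S, F s ≤
        (c6 * L ^ (-((M:ℝ)*d)) * (Cη * t) * Real.exp (-(b*S))) * (S ^ (-α) / α) := by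
      have hrint : IntegrableOn (fun s : ℝ => s ^ (-1-α)) (Ioi S) :=
        integrableOn_Ioi_rpow_of_lt (by linarith) hS0
      have hrint' : IntegrableOn (fun s : ℝ => s ^ (-1-α)) (Ici S) := by
        rwa [integrableOn_Ici_iff_integrableOn_Ioi]
      set D := c6 * L ^ (-((M:ℝ)*d)) * (Cη * t) * Real.exp (-(b*S)) with hD
      have e1 : ∫ s in Ici S, F s ≤ ∫ s in Ici S, D * s ^ (-1-α) := by
        refine setIntegral_mono_on (hFint.mono_set (Ici_subset_Ioi.mpr hS0))
          (hrint'.const_mul D) measurableSet_Ici ?_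
        intro s hs
        rw [mem_Ici] at hs
        have hs0 : 0 < s := lt_of_lt_of_le hS0 hs
        have h1 := hGt s hs
        have h2 := hηb s hs0
        have h3 : Real.exp (-(m ^ (1/α)) * s) ≤ Real.exp (-(b*S)) := by
          rw [neg_mul]
          exact Real.exp_le_exp.mpr (neg_le_neg (mul_le_mul_of_nonneg_left hs hb.le))
        have hLd : 0 ≤ L ^ (-((M:ℝ)*d)) := Real.rpow_nonneg hL0.le _
        calc F s = G s * Real.exp (-(m ^ (1/α)) * s) * η s := rfl
          _ ≤ (c6 * L ^ (-((M:ℝ)*d))) * Real.exp (-(b*S)) * (Cη * t * s ^ (-1-α)) := by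
              refine mul_le_mul (mul_le_mul h1 h3 (Real.exp_nonneg _) ?_) h2 (hη0 s hs0) ?_
              · positivity
              · positivity
          _ = D * s ^ (-1-α) := by rw [hD]; ring
      have e2 : ∫ s in Ici S, D * s ^ (-1-α) = D * (S ^ (-α) / α) := by
        rw [integral_const_mul, integral_Ici_eq_integral_Ioi,
          integral_Ioi_rpow_of_lt (by linarith) hS0,
          show (-1 - α + 1) = -α by ring]
        ring
      linarith
    -- relating the tail exponential to rp
    have hbK : b * K = 2 * m := by
      have h1 : m ^ (1/α) * m ^ (1 - 1/α) = m := by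
        rw [← Real.rpow_add hm, show 1/α + (1 - 1/α) = 1 by ring, Real.rpow_one]
      calc b * K = 2 * (m ^ (1/α) * m ^ (1 - 1/α)) := by rw [hK, hbdef]; ring
        _ = 2 * m := by rw [h1]
    have hrpLM : rp ≤ L ^ ((M:ℝ) * dw) := by
      have hA : rp ≤ (L ^ (M:ℝ)) ^ (dw/dJ) :=
        Real.rpow_le_rpow (by linarith) hrL (by positivity)
      have hB : (L ^ (M:ℝ)) ^ (dw/dJ) = L ^ ((M:ℝ) * (dw/dJ)) :=
        (Real.rpow_mul hL0.le _ _).symm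
      have hC : L ^ ((M:ℝ) * (dw/dJ)) ≤ L ^ ((M:ℝ) * dw) := by
        refine Real.rpow_le_rpow_of_exponent_le hL.le ?_
        have h1 : dw/dJ ≤ dw := div_le_self hdw.le (by linarith)
        exact mul_le_mul_of_nonneg_left h1 (Nat.cast_nonneg M)
      calc rp ≤ (L ^ (M:ℝ)) ^ (dw/dJ) := hA
        _ = L ^ ((M:ℝ) * (dw/dJ)) := hB
        _ ≤ L ^ ((M:ℝ) * dw) := hC
    have hE : Real.exp (-(b*S)) ≤ Real.exp (-(2*m) * rp) := by
      apply Real.exp_le_exp.mpr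
      have h1 : 2*m*rp ≤ b*S := by
        calc 2*m*rp ≤ 2*m*L^((M:ℝ)*dw) :=
              mul_le_mul_of_nonneg_left hrpLM (by linarith)
          _ = b * S := by rw [hSdef, ← hbK]; ring
      rw [neg_mul]
      exact neg_le_neg h1
    have hSα : S ^ (-α) ≤ K ^ (-α) :=
      Real.rpow_le_rpow_of_nonpos hK0 (le_mul_of_one_le_right hK0.le hLM1) (by linarith)
    have hX1 : L ^ (-((M:ℝ)*d)) ≤ 1 :=
      Real.rpow_le_one_of_one_le_of_nonpos hL.le (neg_nonpos.mpr (by positivity))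
    have hemt : Real.exp (m*t) ≤ Real.exp m :=
      Real.exp_le_exp.mpr (mul_le_of_le_one_right hm.le ht1.le)
    have hKey1 : Real.exp (m*t) *
        (c3 * ∫ s in Ioi (0:ℝ), fprof d dw dJ c4 s r * Real.exp (-(m ^ (1/α)) * s) * η s)
        ≤ c3 * (A7 * t * Real.exp (-A8 * rp)) := by
      have h1 : Real.exp (m*t) *
          (c3 * ∫ s in Ioi (0:ℝ), fprof d dw dJ c4 s r * Real.exp (-(m ^ (1/α)) * s) * η s)
          = c3 * Phi d dw dJ α m η c4 t r := by
        simp only [Phi]; ring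
      rw [h1]
      exact mul_le_mul_of_nonneg_left hPhiU hc3.le
    have hKey2 : Real.exp (m*t) *
        ((c6 * L ^ (-((M:ℝ)*d)) * (Cη * t) * Real.exp (-(b*S))) * (S ^ (-α) / α))
        ≤ (Real.exp m * c6 * Cη * K ^ (-α) / α) * t * Real.exp (-(2*m) * rp) := by
      have hSα0 : 0 ≤ S ^ (-α) := Real.rpow_nonneg hS0.le _
      have hLd : 0 ≤ L ^ (-((M:ℝ)*d)) := Real.rpow_nonneg hL0.le _
      calc Real.exp (m*t) *
          ((c6 * L ^ (-((M:ℝ)*d)) * (Cη * t) * Real.exp (-(b*S))) * (S ^ (-α) / α))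
          ≤ Real.exp m * ((c6 * 1 * (Cη * t) * Real.exp (-(2*m)*rp)) * (K ^ (-α) / α)) := by
            gcongr
        _ = (Real.exp m * c6 * Cη * K ^ (-α) / α) * t * Real.exp (-(2*m) * rp) := by ring
    have hE1 : Real.exp (-A8 * rp) ≤ Real.exp (-(min A8 (2*m)) * rp) :=
      Real.exp_le_exp.mpr
        (mul_le_mul_of_nonneg_right (neg_le_neg (min_le_left A8 (2*m))) hrp0)
    have hE2 : Real.exp (-(2*m) * rp) ≤ Real.exp (-(min A8 (2*m)) * rp) :=
      Real.exp_le_exp.mpr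
        (mul_le_mul_of_nonneg_right (neg_le_neg (min_le_right A8 (2*m))) hrp0)
    calc Real.exp (m*t) * ∫ s in Ioi (0:ℝ), F s
        = (Real.exp (m*t) * ∫ s in Ioo 0 S, F s)
          + Real.exp (m*t) * ∫ s in Ici S, F s := by rw [hsplit]; ring
      _ ≤ c3 * (A7 * t * Real.exp (-A8 * rp))
          + (Real.exp m * c6 * Cη * K ^ (-α) / α) * t * Real.exp (-(2*m) * rp) := by
          refine add_le_add
            (le_trans (mul_le_mul_of_nonneg_left hup1 (Real.exp_pos _).le) hKey1)
            (le_trans (mul_le_mul_of_nonneg_left hup2 (Real.exp_pos _).le) hKey2)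
      _ ≤ (c3 * A7 + Real.exp m * c6 * Cη * K ^ (-α) / α) * t
            * Real.exp (-(min A8 (2*m)) * rp) := by
          have b1 : c3 * (A7 * t * Real.exp (-A8 * rp))
              ≤ (c3 * A7 * t) * Real.exp (-(min A8 (2*m)) * rp) := by
            calc c3 * (A7 * t * Real.exp (-A8 * rp))
                = (c3 * A7 * t) * Real.exp (-A8 * rp) := by ring
              _ ≤ (c3 * A7 * t) * Real.exp (-(min A8 (2*m)) * rp) :=
                  mul_le_mul_of_nonneg_left hE1 (by positivity)
          have b2 : (Real.exp m * c6 * Cη * K ^ (-α) / α) * t * Real.exp (-(2*m) * rp)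
              ≤ ((Real.exp m * c6 * Cη * K ^ (-α) / α) * t)
                  * Real.exp (-(min A8 (2*m)) * rp) := by
            calc (Real.exp m * c6 * Cη * K ^ (-α) / α) * t * Real.exp (-(2*m) * rp)
                = ((Real.exp m * c6 * Cη * K ^ (-α) / α) * t) * Real.exp (-(2*m) * rp) := by
                  ring
              _ ≤ ((Real.exp m * c6 * Cη * K ^ (-α) / α) * t)
                  * Real.exp (-(min A8 (2*m)) * rp) :=
                  mul_le_mul_of_nonneg_left hE2 (by positivity)
          calc c3 * (A7 * t * Real.exp (-A8 * rp))
              + (Real.exp m * c6 * Cη * K ^ (-α) / α) * t * Real.exp (-(2*m) * rp)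
              ≤ (c3 * A7 * t) * Real.exp (-(min A8 (2*m)) * rp)
                + ((Real.exp m * c6 * Cη * K ^ (-α) / α) * t)
                    * Real.exp (-(min A8 (2*m)) * rp) := add_le_add b1 b2
            _ = (c3 * A7 + Real.exp m * c6 * Cη * K ^ (-α) / α) * t
                  * Real.exp (-(min A8 (2*m)) * rp) := by ring
end
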